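/- arXiv:1204.0698 — 4 statements merged into one kernel-verified Lean document; each statement's English description precedes it below -/
import Mathlib

section
/- Let f ∈ 𝒜, c ∈ ℂ and κ ∈ ℂ with κ ∉ {0, −1, −2, …}. Then for all z ∈ 𝕌 the recurrence identity z·(B_{κ+1}^c f)′(z) = κ·B_κ^c f(z) − (κ−1)·B_{κ+1}^c f(z) holds. -/
open Complex Metric Set

noncomputable section

/-- The open unit disk 𝕌. -/
def unitDisk : Set ℂ := Metric.ball (0 : ℂ) 1

/-- The class 𝒜 of normalized analytic functions on 𝕌. -/
def InA (f : ℂ → ℂ) : Prop :=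
  DifferentiableOn ℂ f unitDisk ∧ f 0 = 0 ∧ deriv f 0 = 1

/-- ℋ_0 : analytic on 𝕌 with value 0 at the origin. -/
def InH0 (q : ℂ → ℂ) : Prop := DifferentiableOn ℂ q unitDisk ∧ q 0 = 0

/-- ℋ_1 : analytic on 𝕌 with value 1 at the origin. -/
def InH1 (q : ℂ → ℂ) : Prop := DifferentiableOn ℂ q unitDisk ∧ q 0 = 1

/-- Univalent (analytic and injective) on 𝕌. -/
def Univalent (h : ℂ → ℂ) : Prop :=
  DifferentiableOn ℂ h unitDisk ∧ Set.InjOn h unitDisk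

/-- The coefficient (−c)^n / (4^n (κ)_n n!). -/
def besselCoeff (c κ : ℂ) (n : ℕ) : ℂ :=
  (-c) ^ n / ((4 : ℂ) ^ n * (ascPochhammer ℂ n).eval κ * (n.factorial : ℂ))

/-- The n-th Taylor coefficient of f at 0. -/
def taylorCoeff (f : ℂ → ℂ) (n : ℕ) : ℂ := iteratedDeriv n f 0 / (n.factorial : ℂ)

/-- φ_{κ,c} : the normalized generalized Bessel function of the first kind. -/
def genBessel (κ c : ℂ) (z : ℂ) : ℂ := ∑' n : ℕ, besselCoeff c κ n * z ^ (n + 1)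

/-- The operator B_κ^c, the Hadamard product of φ_{κ,c} with f. -/
def besselOp (c κ : ℂ) (f : ℂ → ℂ) (z : ℂ) : ℂ :=
  ∑' n : ℕ, besselCoeff c κ n * taylorCoeff f (n + 1) * z ^ (n + 1)

/-- Subordination f ≺ F on the unit disk. -/
def Subordinate (f F : ℂ → ℂ) : Prop :=
  ∃ w : ℂ → ℂ, DifferentiableOn ℂ w unitDisk ∧ w 0 = 0 ∧
    Set.MapsTo w unitDisk unitDisk ∧ ∀ z ∈ unitDisk, f z = F (w z)

/-- E(q) : boundary points where q blows up. -/
def Eset (q : ℂ → ℂ) : Set ℂ :=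
  {ζ | ζ ∈ Metric.sphere (0 : ℂ) 1 ∧
    Filter.Tendsto q (nhdsWithin ζ unitDisk) (Bornology.cobounded ℂ)}

/-- The class 𝒬. -/
def InQ (q : ℂ → ℂ) : Prop :=
  AnalyticOnNhd ℂ q (Metric.closedBall (0 : ℂ) 1 \ Eset q) ∧
  Set.InjOn q (Metric.closedBall (0 : ℂ) 1 \ Eset q) ∧
  ∀ ζ ∈ Metric.sphere (0 : ℂ) 1 \ Eset q, deriv q ζ ≠ 0

def InQ0 (q : ℂ → ℂ) : Prop := InQ q ∧ q 0 = 0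

def InQ1 (q : ℂ → ℂ) : Prop := InQ q ∧ q 0 = 1

/-- The admissibility class Φ_H[Ω,q] (Definition 2.1), with parameter κ. -/
def PhiH (κ : ℂ) (Ω : Set ℂ) (q : ℂ → ℂ) (φ : ℂ → ℂ → ℂ → ℂ → ℂ) : Prop :=
  ∀ z ∈ unitDisk, ∀ ζ ∈ Metric.sphere (0 : ℂ) 1 \ Eset q, ∀ k : ℝ, 1 ≤ k →
    ∀ u v w : ℂ, u = q ζ →
      v = ((k : ℂ) * ζ * deriv q ζ + (κ - 1) * q ζ) / κ →
      ((κ * (κ - 1) * w - (κ - 2) * (κ - 1) * u) / (κ * v - (κ - 1) * u) -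
          (2 * κ - 3)).re ≥ k * (ζ * deriv (deriv q) ζ / deriv q ζ + 1).re →
      φ u v w z ∉ Ω

/-- The admissibility class Φ_{H,1}[Ω,q] (Definition 2.3), with parameter κ. -/
def PhiH1 (κ : ℂ) (Ω : Set ℂ) (q : ℂ → ℂ) (φ : ℂ → ℂ → ℂ → ℂ → ℂ) : Prop :=
  ∀ z ∈ unitDisk, ∀ ζ ∈ Metric.sphere (0 : ℂ) 1 \ Eset q, q ζ ≠ 0 → ∀ k : ℝ, 1 ≤ k →
    ∀ u v w : ℂ, u = q ζ →
      v = (1 / (κ - 1)) * ((k : ℂ) * ζ * deriv q ζ / q ζ + κ * q ζ - 1) →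
      ((κ - 1) * v * ((κ - 1) * (w - v) + 1 - w) / ((κ - 1) * v + 1 - κ * u) -
          (2 * κ * u - 1 - (κ - 1) * v)).re ≥
        k * (ζ * deriv (deriv q) ζ / deriv q ζ + 1).re →
      φ u v w z ∉ Ω

/-- The admissibility class Φ_{H,2}[Ω,q] (Definition 2.5), with parameter κ. -/
def PhiH2 (κ : ℂ) (Ω : Set ℂ) (q : ℂ → ℂ) (φ : ℂ → ℂ → ℂ → ℂ → ℂ) : Prop :=
  ∀ z ∈ unitDisk, ∀ ζ ∈ Metric.sphere (0 : ℂ) 1 \ Eset q, ∀ k : ℝ, 1 ≤ k →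
    ∀ u v w : ℂ, u = q ζ →
      v = ((k : ℂ) * ζ * deriv q ζ + κ * q ζ) / κ →
      ((κ - 1) * (w - u) / (v - u) + (1 - 2 * κ)).re ≥
        k * (ζ * deriv (deriv q) ζ / deriv q ζ + 1).re →
      φ u v w z ∉ Ω

/-- The admissibility class Φ_H[Ω,M] (Definition 2.2), with parameter κ. -/
def PhiHM (κ : ℂ) (Ω : Set ℂ) (M : ℝ) (φ : ℂ → ℂ → ℂ → ℂ → ℂ) : Prop :=
  ∀ z ∈ unitDisk, ∀ θ : ℝ, ∀ k : ℝ, 1 ≤ k → ∀ L : ℂ,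
    (L * Complex.exp (-(θ : ℂ) * Complex.I)).re ≥ (k - 1) * k * M →
    φ ((M : ℂ) * Complex.exp ((θ : ℂ) * Complex.I))
      (((k : ℂ) + κ - 1) / κ * (M : ℂ) * Complex.exp ((θ : ℂ) * Complex.I))
      ((L + (κ - 1) * (2 * (k : ℂ) + κ - 2) * (M : ℂ) * Complex.exp ((θ : ℂ) * Complex.I)) /
        (κ * (κ - 1))) z ∉ Ω

/-- The admissibility class Φ′_H[Ω,q] (Definition 3.1), with parameter κ. -/
def PhiH' (κ : ℂ) (Ω : Set ℂ) (q : ℂ → ℂ) (φ : ℂ → ℂ → ℂ → ℂ → ℂ) : Prop :=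
  ∀ z ∈ unitDisk, ∀ ς ∈ Metric.sphere (0 : ℂ) 1, ∀ m : ℝ, 1 ≤ m →
    ∀ u v w : ℂ, u = q z →
      v = (z * deriv q z + (m : ℂ) * (κ - 1) * q z) / ((m : ℂ) * κ) →
      ((κ * (κ - 1) * w - (κ - 2) * (κ - 1) * u) / (κ * v - (κ - 1) * u) -
          (2 * κ - 3)).re ≤ (1 / m) * (z * deriv (deriv q) z / deriv q z + 1).re →
      φ u v w ς ∈ Ω

/-- The quotient g/h extended analytically with value 1 at the origin. -/
def ratio (g h : ℂ → ℂ) (z : ℂ) : ℂ := if z = 0 then 1 else g z / h z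

/-- The quotient g(z)/z extended analytically with value 1 at the origin. -/
def divZ (g : ℂ → ℂ) (z : ℂ) : ℂ := if z = 0 then 1 else g z / z

/-- z ↦ φ(B_{κ+1}^c f(z), B_κ^c f(z), B_{κ−1}^c f(z); z). -/
def opPhi (c κ : ℂ) (φ : ℂ → ℂ → ℂ → ℂ → ℂ) (f : ℂ → ℂ) (z : ℂ) : ℂ :=
  φ (besselOp c (κ + 1) f z) (besselOp c κ f z) (besselOp c (κ - 1) f z) z



namespace BesselRecAux

open Polynomial

lemma poch_ne_zero (κ : ℂ) (hκ : ∀ n : ℕ, κ ≠ -(n : ℂ)) (n : ℕ) :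
    (ascPochhammer ℂ n).eval κ ≠ 0 := by
  induction n with
  | zero => simp [ascPochhammer_zero]
  | succ n ih =>
    rw [ascPochhammer_succ_right]
    simp only [Polynomial.eval_mul, Polynomial.eval_add, Polynomial.eval_X,
      Polynomial.eval_natCast]
    exact mul_ne_zero ih (by intro h; exact hκ n (by linear_combination h))

lemma poch_eval_succ_right (κ : ℂ) (n : ℕ) :
    (ascPochhammer ℂ (n+1)).eval κ = (ascPochhammer ℂ n).eval κ * (κ + n) := by
  rw [ascPochhammer_succ_right]; simp

lemma poch_eval_succ_left (κ : ℂ) (n : ℕ) :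
    (ascPochhammer ℂ (n+1)).eval κ = κ * (ascPochhammer ℂ n).eval (κ + 1) := by
  rw [ascPochhammer_succ_left]
  simp [Polynomial.eval_comp]

lemma poch_lb (κ : ℂ) (hκ : ∀ n : ℕ, κ ≠ -(n : ℂ)) :
    ∃ ε > 0, ∀ n : ℕ, ε ≤ ‖(ascPochhammer ℂ n).eval κ‖ := by
  have hne := poch_ne_zero κ hκ
  set N : ℕ := ⌈‖κ‖⌉₊ + 1 with hN
  have hmono : ∀ m, N ≤ m → ‖(ascPochhammer ℂ N).eval κ‖ ≤ ‖(ascPochhammer ℂ m).eval κ‖ := by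
    intro m hm
    induction m, hm using Nat.le_induction with
    | base => exact le_refl _
    | succ m hm ih =>
      have hrw : ‖(ascPochhammer ℂ (m+1)).eval κ‖
          = ‖(ascPochhammer ℂ m).eval κ‖ * ‖κ + (m:ℂ)‖ := by
        rw [ascPochhammer_succ_right]; simp [norm_mul]
      rw [hrw]
      have h2 : ‖(m:ℂ)‖ ≤ ‖κ + (m:ℂ)‖ + ‖κ‖ := by
        simpa using norm_add_le (κ + (m:ℂ)) (-κ)
      have hm' : ‖κ‖ + 1 ≤ (m:ℝ) := by
        have h3 : (N:ℝ) ≤ m := by exact_mod_cast hm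
        push_cast [hN] at h3
        nlinarith [Nat.le_ceil ‖κ‖]
      have h1 : (1:ℝ) ≤ ‖κ + (m:ℂ)‖ := by
        have h4 : ‖(m:ℂ)‖ = (m:ℝ) := by simp
        rw [h4] at h2
        linarith
      calc ‖(ascPochhammer ℂ N).eval κ‖ ≤ ‖(ascPochhammer ℂ m).eval κ‖ := ih
      _ = ‖(ascPochhammer ℂ m).eval κ‖ * 1 := by ring
      _ ≤ ‖(ascPochhammer ℂ m).eval κ‖ * ‖κ + (m:ℂ)‖ :=
          mul_le_mul_of_nonneg_left h1 (norm_nonneg _)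
  obtain ⟨n₀, hn₀, hmin⟩ := (Finset.range (N+1)).exists_min_image
    (fun n => ‖(ascPochhammer ℂ n).eval κ‖) ⟨0, Finset.mem_range.2 (Nat.succ_pos _)⟩
  refine ⟨‖(ascPochhammer ℂ n₀).eval κ‖, norm_pos_iff.2 (hne n₀), fun n => ?_⟩
  rcases le_or_gt n N with h | h
  · exact hmin n (Finset.mem_range.2 (Nat.lt_succ_of_le h))
  · exact (hmin N (Finset.mem_range.2 (Nat.lt_succ_self _))).trans (hmono n h.le)

lemma taylor_bound (f : ℂ → ℂ) (hf : DifferentiableOn ℂ f unitDisk) {t : ℝ}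
    (h0 : 0 ≤ t) (h1 : t < 1) : ∃ C > 0, ∀ m, ‖taylorCoeff f m‖ * t ^ m ≤ C := by
  set s : NNReal := ⟨(t+1)/2, by positivity⟩ with hs
  have hs1 : (s:ℝ) < 1 := by show (t+1)/2 < 1; linarith
  have hts : t < (s:ℝ) := by show t < (t+1)/2; linarith
  have hs0 : 0 < s := by
    rw [← NNReal.coe_lt_coe]; simp [hs]; linarith
  have hd : DifferentiableOn ℂ f (Metric.closedBall 0 (s:ℝ)) := by
    apply hf.mono
    intro x hx
    simp only [Metric.mem_closedBall, dist_zero_right] at hx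
    exact Metric.mem_ball.2 (by simpa [dist_zero_right] using lt_of_le_of_lt hx hs1)
  have hp := hd.hasFPowerSeriesOnBall hs0
  set p := cauchyPowerSeries f 0 s with hpdef
  have hrad : (s : ENNReal) ≤ p.radius := hp.r_le
  have tcoeff : ∀ m, taylorCoeff f m = p.coeff m := by
    intro m
    have h2 := hp.factorial_smul (y := (1:ℂ)) m
    rw [← iteratedDeriv_eq_iteratedFDeriv] at h2
    have h3 : (m.factorial : ℂ) * p.coeff m = iteratedDeriv m f 0 := by
      rw [← h2, nsmul_eq_mul]; rfl
    rw [taylorCoeff, ← h3]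
    rw [mul_comm, mul_div_assoc, div_self (by exact_mod_cast m.factorial_ne_zero), mul_one]
  have hlt : (t.toNNReal : ENNReal) < p.radius := by
    refine lt_of_lt_of_le ?_ hrad
    rw [ENNReal.coe_lt_coe, ← NNReal.coe_lt_coe, Real.coe_toNNReal _ h0]
    exact hts
  obtain ⟨C, hC0, hC⟩ := p.norm_mul_pow_le_of_lt_radius hlt
  refine ⟨C, hC0, fun m => ?_⟩
  have h5 := hC m
  rw [Real.coe_toNNReal _ h0] at h5
  rwa [tcoeff, ← FormalMultilinearSeries.norm_apply_eq_norm_coef]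

lemma bessel_summable (c κ' : ℂ) (hκ' : ∀ n : ℕ, κ' ≠ -(n : ℂ)) (f : ℂ → ℂ)
    (hf : DifferentiableOn ℂ f unitDisk) {r : ℝ} (hr0 : 0 ≤ r) (hr1 : r < 1) :
    Summable (fun n : ℕ =>
      ‖besselCoeff c κ' n * taylorCoeff f (n + 1)‖ * (((n : ℝ) + 1) * r ^ n)) := by
  obtain ⟨ε, hε0, hε⟩ := poch_lb κ' hκ'
  obtain ⟨t, ht0, ht1, hrt⟩ : ∃ t : ℝ, 0 < t ∧ t < 1 ∧ r < t :=
    ⟨(r + 1) / 2, by linarith, by linarith, by linarith⟩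
  obtain ⟨C, hC0, hC⟩ := taylor_bound f hf ht0.le ht1
  refine Summable.of_nonneg_of_le (fun n => by positivity) (fun n => ?_)
    (((Real.summable_pow_div_factorial (2 * ‖c‖))).mul_left (C / (t * ε)))
  have hTn : ‖taylorCoeff f (n + 1)‖ ≤ C / t ^ (n + 1) :=
    (le_div_iff₀ (by positivity)).2 (hC (n + 1))
  have hB : ‖besselCoeff c κ' n‖ ≤ ‖c‖ ^ n / (4 ^ n * ε * n.factorial) := by
    rw [besselCoeff, norm_div, norm_mul, norm_mul, norm_pow, norm_pow, norm_neg]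
    have h4 : ‖(4 : ℂ)‖ = 4 := by
      rw [show (4:ℂ) = ((4:ℕ):ℂ) by norm_num, Complex.norm_natCast]; norm_num
    rw [h4, Complex.norm_natCast]
    gcongr
    exact hε n
  calc ‖besselCoeff c κ' n * taylorCoeff f (n + 1)‖ * (((n : ℝ) + 1) * r ^ n)
      = ‖besselCoeff c κ' n‖ * ‖taylorCoeff f (n + 1)‖ * (((n : ℝ) + 1) * r ^ n) := by
        rw [norm_mul]
    _ ≤ (‖c‖ ^ n / (4 ^ n * ε * n.factorial)) * (C / t ^ (n + 1)) * (((n : ℝ) + 1) * r ^ n) := by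
        gcongr
    _ = (C / (t * ε)) * ((((n : ℝ) + 1) * (‖c‖ * r / (4 * t)) ^ n) / n.factorial) := by
        rw [div_pow, mul_pow (4:ℝ) t]
        field_simp
        ring
    _ ≤ (C / (t * ε)) * ((2 * ‖c‖) ^ n / n.factorial) := by
        gcongr (C / (t * ε)) * (?_ / (n.factorial : ℝ))
        have h1 : ((n : ℝ) + 1) ≤ 2 ^ n := by
          exact_mod_cast (Nat.lt_two_pow_self (n := n))
        have h2 : (‖c‖ * r / (4 * t)) ^ n ≤ ‖c‖ ^ n := by
          apply pow_le_pow_left₀ (by positivity)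
          rw [div_le_iff₀ (by positivity)]
          nlinarith [norm_nonneg c]
        calc ((n : ℝ) + 1) * (‖c‖ * r / (4 * t)) ^ n ≤ 2 ^ n * ‖c‖ ^ n :=
              mul_le_mul h1 h2 (by positivity) (by positivity)
        _ = (2 * ‖c‖) ^ n := (mul_pow _ _ _).symm

lemma bessel_summable_z (c κ' : ℂ) (hκ' : ∀ n : ℕ, κ' ≠ -(n : ℂ)) (f : ℂ → ℂ)
    (hf : DifferentiableOn ℂ f unitDisk) {z : ℂ} {r : ℝ} (hzr : ‖z‖ ≤ r)
    (hr1 : r < 1) :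
    Summable (fun n : ℕ => besselCoeff c κ' n * taylorCoeff f (n + 1) * z ^ (n + 1)) := by
  have hr0 : 0 ≤ r := le_trans (norm_nonneg z) hzr
  apply Summable.of_norm
  refine Summable.of_nonneg_of_le (fun n => norm_nonneg _) (fun n => ?_)
    (bessel_summable c κ' hκ' f hf hr0 hr1)
  rw [norm_mul, norm_pow]
  gcongr
  calc ‖z‖ ^ (n+1) ≤ r ^ (n+1) := by gcongr
    _ ≤ ((n:ℝ) + 1) * r ^ n := by
        rw [pow_succ']
        nlinarith [pow_nonneg hr0 n, hr1.le, Nat.cast_nonneg (α := ℝ) n]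

lemma bessel_coeff_rec (c κ : ℂ) (hκ : ∀ n : ℕ, κ ≠ -(n : ℂ)) (n : ℕ) :
    κ * besselCoeff c κ n = (κ + n) * besselCoeff c (κ + 1) n := by
  have hκ1 : ∀ m : ℕ, κ + 1 ≠ -(m : ℂ) := by
    intro m h
    exact hκ (m+1) (by push_cast; linear_combination h)
  have hP : (ascPochhammer ℂ n).eval κ ≠ 0 := poch_ne_zero κ hκ n
  have hP1 : (ascPochhammer ℂ n).eval (κ+1) ≠ 0 := poch_ne_zero (κ+1) hκ1 n
  have key : κ * (ascPochhammer ℂ n).eval (κ+1) = (κ + n) * (ascPochhammer ℂ n).eval κ := by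
    rw [← poch_eval_succ_left κ n, poch_eval_succ_right κ n]; ring
  have h4 : (4:ℂ) ^ n ≠ 0 := pow_ne_zero _ (by norm_num)
  have hfa : (n.factorial : ℂ) ≠ 0 := by exact_mod_cast n.factorial_ne_zero
  rw [besselCoeff, besselCoeff]
  field_simp
  linear_combination ((-c) ^ n) * key

end BesselRecAux

open BesselRecAux Polynomial in
/-- Recurrence identity for the operator B_κ^c. -/
theorem bessel_op_recurrence (c κ : ℂ) (hκ : ∀ n : ℕ, κ ≠ -(n : ℂ))
    (f : ℂ → ℂ) (hf : InA f) :
    ∀ z ∈ unitDisk,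
      z * deriv (besselOp c (κ + 1) f) z =
        κ * besselOp c κ f z - (κ - 1) * besselOp c (κ + 1) f z := by
  intro z hz
  have hdf : DifferentiableOn ℂ f unitDisk := hf.1
  have hκ1 : ∀ m : ℕ, κ + 1 ≠ -(m : ℂ) := by
    intro m h
    exact hκ (m+1) (by push_cast; linear_combination h)
  have hznorm : ‖z‖ < 1 := by simpa [unitDisk, dist_zero_right] using hz
  obtain ⟨r, hzr, hr1⟩ : ∃ r : ℝ, ‖z‖ < r ∧ r < 1 :=
    ⟨(‖z‖ + 1) / 2, by linarith, by linarith⟩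
  have hr0 : 0 ≤ r := le_trans (norm_nonneg z) hzr.le
  set A : ℕ → ℂ := fun n => besselCoeff c (κ + 1) n * taylorCoeff f (n + 1) with hA
  have hderiv : HasDerivAt (besselOp c (κ + 1) f)
      (∑' n : ℕ, A n * (((n : ℂ) + 1) * z ^ n)) z := by
    have h0 := hasDerivAt_tsum_of_isPreconnected
      (u := fun n => ‖A n‖ * (((n : ℝ) + 1) * r ^ n))
      (g := fun n y => A n * y ^ (n + 1))
      (g' := fun n y => A n * (((n : ℂ) + 1) * y ^ n))
      (bessel_summable c (κ + 1) hκ1 f hdf hr0 hr1)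
      (Metric.isOpen_ball (x := (0:ℂ)) (ε := r))
      ((convex_ball (0:ℂ) r).isPreconnected)
      (fun n y _ => by
        have h1 := (hasDerivAt_pow (n + 1) y).const_mul (A n)
        simpa [mul_comm, mul_assoc, Nat.cast_add] using h1)
      (fun n y hy => by
        have hyr : ‖y‖ ≤ r := (mem_ball_zero_iff.1 hy).le
        have hnn : ‖((n : ℂ) + 1)‖ = (n : ℝ) + 1 := by
          rw [show ((n:ℂ) + 1) = ((n+1 : ℕ) : ℂ) by push_cast; ring, Complex.norm_natCast]
          push_cast; ring
        show ‖A n * (((n : ℂ) + 1) * y ^ n)‖ ≤ ‖A n‖ * (((n : ℝ) + 1) * r ^ n)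
        rw [norm_mul (A n)]
        refine mul_le_mul_of_nonneg_left ?_ (norm_nonneg _)
        calc ‖((n : ℂ) + 1) * y ^ n‖ = ((n : ℝ) + 1) * ‖y‖ ^ n := by
              rw [norm_mul, norm_pow, hnn]
          _ ≤ ((n : ℝ) + 1) * r ^ n := by gcongr)
      (Metric.mem_ball_self (lt_of_le_of_lt (norm_nonneg z) hzr))
      (by
        simp only [zero_pow (Nat.succ_ne_zero _), mul_zero]
        exact summable_zero)
      (mem_ball_zero_iff.2 hzr)
    exact h0
  rw [hderiv.deriv]
  have SA : Summable (fun n : ℕ => besselCoeff c (κ+1) n * taylorCoeff f (n+1) * z^(n+1)) :=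
    bessel_summable_z c (κ+1) hκ1 f hdf hzr.le hr1
  have SK : Summable (fun n : ℕ => besselCoeff c κ n * taylorCoeff f (n+1) * z^(n+1)) :=
    bessel_summable_z c κ hκ f hdf hzr.le hr1
  calc z * ∑' n : ℕ, A n * (((n:ℂ)+1) * z^n)
      = ∑' n : ℕ, z * (A n * (((n:ℂ)+1) * z^n)) := (tsum_mul_left).symm
    _ = ∑' n : ℕ, (κ * (besselCoeff c κ n * taylorCoeff f (n+1) * z^(n+1))
          - (κ-1) * (besselCoeff c (κ+1) n * taylorCoeff f (n+1) * z^(n+1))) := by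
        apply tsum_congr; intro n
        have key := bessel_coeff_rec c κ hκ n
        simp only [hA, pow_succ]
        linear_combination (-(taylorCoeff f (n+1)) * z^n * z) * key
    _ = κ * besselOp c κ f z - (κ - 1) * besselOp c (κ + 1) f z := by
        rw [Summable.tsum_sub (SK.mul_left κ) (SA.mul_left (κ-1)), tsum_mul_left, tsum_mul_left]
        rfl

end
end

section
/- (Corollary 2.4) Let c ∈ ℂ, let κ ∈ ℂ with Re(κ) ≥ 0 and κ ≠ 0, and let M > 0. If f ∈ 𝒜 satisfies |B_κ^c f(z)| < M for all z ∈ 𝕌, then |B_{κ+1}^c f(z)| < M for all z ∈ 𝕌. -/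
open Complex Metric Set

noncomputable section

namespace Cor24Helper

lemma kappaAdd_ne {κ : ℂ} (hκre : 0 ≤ κ.re) (hκ0 : κ ≠ 0) (n : ℕ) : κ + (n : ℂ) ≠ 0 := by
  intro h
  have hκ : κ = -(n : ℂ) := by linear_combination h
  have hre : (0:ℝ) ≤ -(n:ℝ) := by
    have h2 := hκre
    rw [hκ] at h2
    simpa using h2
  have hn : (n : ℝ) = 0 := le_antisymm (by linarith) (Nat.cast_nonneg n)
  have hn0 : n = 0 := by exact_mod_cast hn
  apply hκ0
  rw [hκ, hn0]
  simp

lemma poch_ne {κ : ℂ} (hκre : 0 ≤ κ.re) (hκ0 : κ ≠ 0) (n : ℕ) :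
    (ascPochhammer ℂ n).eval κ ≠ 0 := by
  induction n with
  | zero => simp [ascPochhammer_zero]
  | succ n ih =>
    rw [ascPochhammer_succ_eval]
    exact mul_ne_zero ih (kappaAdd_ne hκre hκ0 n)

lemma poch_norm_ge {κ : ℂ} (hκre : 0 ≤ κ.re) (n : ℕ) :
    (n.factorial : ℝ) ≤ ‖(ascPochhammer ℂ n).eval (κ + 1)‖ := by
  induction n with
  | zero => simp [ascPochhammer_zero]
  | succ n ih =>
    rw [ascPochhammer_succ_eval, norm_mul]
    have h1 : ((n:ℝ) + 1) ≤ ‖κ + 1 + (n : ℂ)‖ := by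
      calc ((n:ℝ) + 1) ≤ (κ + 1 + (n : ℂ)).re := by
            simp only [Complex.add_re, Complex.one_re, Complex.natCast_re]
            linarith
        _ ≤ ‖κ + 1 + (n : ℂ)‖ := Complex.re_le_norm _
        _ = ‖κ + 1 + (n : ℂ)‖ := rfl
    have h2 : ((n+1).factorial : ℝ) = ((n:ℝ)+1) * (n.factorial : ℝ) := by
      rw [Nat.factorial_succ]; push_cast; ring
    rw [h2]
    calc ((n:ℝ)+1) * (n.factorial : ℝ)
        ≤ ‖κ + 1 + (n : ℂ)‖ * ‖(ascPochhammer ℂ n).eval (κ + 1)‖ :=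
          mul_le_mul h1 ih (Nat.cast_nonneg _) (norm_nonneg _)
      _ = ‖(ascPochhammer ℂ n).eval (κ + 1)‖ * ‖κ + 1 + (n : ℂ)‖ := mul_comm _ _

lemma poch_id (κ : ℂ) (n : ℕ) :
    κ * (ascPochhammer ℂ n).eval (κ + 1) = (ascPochhammer ℂ n).eval κ * (κ + n) := by
  induction n with
  | zero => simp [ascPochhammer_zero]
  | succ n ih =>
    rw [ascPochhammer_succ_eval, ascPochhammer_succ_eval]
    push_cast
    linear_combination (κ + 1 + (n:ℂ)) * ih

lemma poch_norm_pos {κ : ℂ} (hκre : 0 ≤ κ.re) (n : ℕ) :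
    (0:ℝ) < ‖(ascPochhammer ℂ n).eval (κ + 1)‖ :=
  lt_of_lt_of_le (by exact_mod_cast n.factorial_pos) (poch_norm_ge hκre n)

lemma besselCoeff_id {c κ : ℂ} (hκre : 0 ≤ κ.re) (hκ0 : κ ≠ 0) (n : ℕ) :
    κ * besselCoeff c κ n = (κ + n) * besselCoeff c (κ + 1) n := by
  have hP := poch_ne hκre hκ0 n
  have hQ : (ascPochhammer ℂ n).eval (κ + 1) ≠ 0 :=
    norm_pos_iff.mp (poch_norm_pos hκre n)
  have h4 : ((4:ℂ)) ^ n ≠ 0 := pow_ne_zero _ (by norm_num)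
  have hfac : ((n.factorial : ℂ)) ≠ 0 := by exact_mod_cast n.factorial_ne_zero
  unfold besselCoeff
  rw [mul_div_assoc', mul_div_assoc', div_eq_div_iff (mul_ne_zero (mul_ne_zero h4 hP) hfac)
    (mul_ne_zero (mul_ne_zero h4 hQ) hfac)]
  linear_combination ((-c)^n * (n.factorial:ℂ) * (4:ℂ)^n) * poch_id κ n

lemma coeff_bound {f : ℂ → ℂ} (hf : InA f) :
    ∃ C : ℝ, 0 ≤ C ∧ ∀ n, ‖taylorCoeff f n‖ ≤ C * 2 ^ n := by
  have hdiff : DifferentiableOn ℂ f (Metric.ball (0:ℂ) 1) := hf.1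
  have hz : (2⁻¹ : ℂ) ∈ Metric.ball (0:ℂ) 1 := by
    rw [mem_ball_zero_iff, norm_inv]
    norm_num
  have hs := Complex.hasSum_taylorSeries_on_ball hdiff hz
  have hsum := hs.summable
  have htend := hsum.tendsto_atTop_zero
  have hb : BddAbove (Set.range fun n : ℕ =>
      ‖(n.factorial : ℂ)⁻¹ • ((2⁻¹:ℂ) - 0) ^ n • iteratedDeriv n f 0‖) :=
    (htend.norm.bddAbove_range)
  obtain ⟨C, hC⟩ := hb
  rw [mem_upperBounds] at hC
  have hC' : ∀ n : ℕ, ‖(n.factorial : ℂ)⁻¹ • ((2⁻¹:ℂ) - 0) ^ n • iteratedDeriv n f 0‖ ≤ C :=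
    fun n => hC _ ⟨n, rfl⟩
  have hnorm : ∀ n : ℕ, ‖(n.factorial : ℂ)⁻¹ • ((2⁻¹:ℂ) - 0) ^ n • iteratedDeriv n f 0‖
      = ‖taylorCoeff f n‖ * 2⁻¹ ^ n := by
    intro n
    rw [smul_eq_mul, smul_eq_mul, sub_zero]
    rw [show (n.factorial : ℂ)⁻¹ * ((2⁻¹:ℂ) ^ n * iteratedDeriv n f 0)
        = (iteratedDeriv n f 0 / (n.factorial : ℂ)) * (2⁻¹:ℂ) ^ n by ring]
    rw [norm_mul, norm_pow]
    have : ‖(2⁻¹ : ℂ)‖ = (2⁻¹ : ℝ) := by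
      rw [norm_inv]
      norm_num
    rw [this]
    rfl
  refine ⟨C, le_trans (norm_nonneg _) (hC' 0), fun n => ?_⟩
  have h1 := hC' n
  rw [hnorm n] at h1
  have h2 : (0:ℝ) < 2⁻¹ ^ n := by positivity
  rw [show (C * 2 ^ n : ℝ) = C / 2⁻¹ ^ n by
    rw [div_eq_mul_inv, ← inv_pow, inv_inv]]
  rw [le_div_iff₀ h2]
  exact h1

lemma bessel_term_bound {c κ : ℂ} {f : ℂ → ℂ} (hκre : 0 ≤ κ.re)
    {C : ℝ} (hC0 : 0 ≤ C) (hC : ∀ n, ‖taylorCoeff f n‖ ≤ C * 2 ^ n) (n : ℕ) :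
    ‖besselCoeff c (κ + 1) n * taylorCoeff f (n + 1)‖
      ≤ 2 * C * (‖c‖ / 2) ^ n / ((n.factorial : ℝ)) ^ 2 := by
  have hQ := poch_norm_ge hκre n
  have hQpos := poch_norm_pos hκre n
  have hfacpos : (0:ℝ) < (n.factorial : ℝ) := by exact_mod_cast n.factorial_pos
  have hbc : ‖besselCoeff c (κ + 1) n‖
      = ‖c‖ ^ n / ((4:ℝ) ^ n * ‖(ascPochhammer ℂ n).eval (κ + 1)‖ * (n.factorial : ℝ)) := by
    unfold besselCoeff
    rw [norm_div, norm_pow, norm_neg, norm_mul, norm_mul, norm_pow,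
      Complex.norm_natCast, show ‖(4:ℂ)‖ = 4 by norm_num]
  have hbc2 : ‖besselCoeff c (κ + 1) n‖
      ≤ ‖c‖ ^ n / ((4:ℝ) ^ n * (n.factorial : ℝ) * (n.factorial : ℝ)) := by
    rw [hbc]
    gcongr
  rw [norm_mul]
  calc ‖besselCoeff c (κ + 1) n‖ * ‖taylorCoeff f (n + 1)‖
      ≤ (‖c‖ ^ n / ((4:ℝ) ^ n * (n.factorial : ℝ) * (n.factorial : ℝ))) * (C * 2 ^ (n+1)) :=
        mul_le_mul hbc2 (hC (n+1)) (norm_nonneg _) (by positivity)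
    _ = 2 * C * (‖c‖ / 2) ^ n / ((n.factorial : ℝ)) ^ 2 := by
        rw [div_pow, show (4:ℝ) ^ n = 2 ^ n * 2 ^ n by
          rw [← mul_pow]; norm_num]
        rw [pow_succ]
        field_simp

open Filter in
lemma master {c κ : ℂ} {f : ℂ → ℂ} (hκre : 0 ≤ κ.re) (hf : InA f) {x : ℝ} (hx : 0 ≤ x) :
    Summable (fun n : ℕ => ((n:ℝ)+1)^2 * ‖besselCoeff c (κ+1) n * taylorCoeff f (n+1)‖ * x^n) := by
  obtain ⟨C, hC0, hC⟩ := coeff_bound hf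
  set y : ℝ := ‖c‖ / 2 * x with hy
  have hy0 : 0 ≤ y := by positivity
  have hts : Summable (fun n : ℕ => 2*C*((n:ℝ)+1)^2 * y^n / ((n.factorial:ℝ))^2) := by
    obtain ⟨N, hN⟩ := exists_nat_ge (8*y)
    apply summable_of_ratio_norm_eventually_le (r := 1/2) (by norm_num)
    filter_upwards [Filter.eventually_ge_atTop N] with n hn
    have hfac : (0:ℝ) < (n.factorial:ℝ) := by exact_mod_cast n.factorial_pos
    have hNn : 8*y ≤ (n:ℝ) := le_trans hN (Nat.cast_le.mpr hn)
    have hyn : (0:ℝ) ≤ y^n := by positivity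
    rw [Real.norm_of_nonneg (by positivity), Real.norm_of_nonneg (by positivity)]
    have hfs : (((n+1).factorial : ℝ)) = ((n:ℝ)+1) * (n.factorial:ℝ) := by
      rw [Nat.factorial_succ]; push_cast; ring
    have hn0 : (0:ℝ) ≤ (n:ℝ) := Nat.cast_nonneg n
    have key : 2*((n:ℝ)+2)^2*y ≤ ((n:ℝ)+1)^4 := by
      have k1 := mul_le_mul_of_nonneg_left hNn (show (0:ℝ) ≤ ((n:ℝ)+2)^2/4 by positivity)
      nlinarith [k1, hn0, sq_nonneg ((n:ℝ)), sq_nonneg ((n:ℝ)+1), sq_nonneg ((n:ℝ)-1)]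
    push_cast [hfs]
    rw [show (1/2 : ℝ) * (2*C*((n:ℝ)+1)^2*y^n/((n.factorial:ℝ))^2)
        = (1/2 * (2*C*((n:ℝ)+1)^2*y^n))/((n.factorial:ℝ))^2 by ring]
    rw [div_le_div_iff₀ (by positivity) (by positivity)]
    have hpow : y ^ (n+1) = y * y^n := by rw [pow_succ]; ring
    rw [hpow]
    nlinarith [mul_le_mul_of_nonneg_left key
      (show (0:ℝ) ≤ C * y^n * (n.factorial:ℝ)^2 by positivity), sq_nonneg ((n:ℝ)+1), hfac]
  apply Summable.of_nonneg_of_le (fun n => by positivity) _ hts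
  intro n
  have hb := bessel_term_bound (c := c) hκre hC0 hC n
  calc ((n:ℝ)+1)^2 * ‖besselCoeff c (κ+1) n * taylorCoeff f (n+1)‖ * x^n
      ≤ ((n:ℝ)+1)^2 * (2 * C * (‖c‖ / 2) ^ n / ((n.factorial : ℝ)) ^ 2) * x^n := by
        apply mul_le_mul_of_nonneg_right (mul_le_mul_of_nonneg_left hb (by positivity)) (by positivity)
    _ = 2*C*((n:ℝ)+1)^2 * y^n / ((n.factorial:ℝ))^2 := by
        rw [hy, mul_pow]
        ring

open Filter in
lemma summable_D1 {c κ : ℂ} {f : ℂ → ℂ} (hκre : 0 ≤ κ.re) (hf : InA f) (z : ℂ) :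
    Summable (fun n : ℕ => besselCoeff c (κ+1) n * taylorCoeff f (n+1) * z^(n+1)) := by
  apply Summable.of_norm_bounded ((master hκre hf (norm_nonneg z)).mul_right ‖z‖)
  intro n
  rw [norm_mul, norm_pow, pow_succ]
  have hA : (0:ℝ) ≤ ‖besselCoeff c (κ+1) n * taylorCoeff f (n+1)‖ := norm_nonneg _
  have h1 : (1:ℝ) ≤ ((n:ℝ)+1)^2 := by nlinarith [Nat.cast_nonneg (α := ℝ) n]
  nlinarith [mul_le_mul_of_nonneg_right h1
    (mul_nonneg hA (by positivity : (0:ℝ) ≤ ‖z‖^n * ‖z‖))]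

open Filter in
lemma summable_D2 {c κ : ℂ} {f : ℂ → ℂ} (hκre : 0 ≤ κ.re) (hf : InA f) (z : ℂ) :
    Summable (fun n : ℕ => ((n:ℂ)+1) * (besselCoeff c (κ+1) n * taylorCoeff f (n+1)) * z^n) := by
  apply Summable.of_norm_bounded (master hκre hf (norm_nonneg z))
  intro n
  rw [norm_mul, norm_mul, norm_pow]
  have hn1 : ‖((n:ℂ)+1)‖ = (n:ℝ)+1 := by
    rw [show ((n:ℂ)+1) = (((n+1):ℕ):ℂ) by push_cast; ring, Complex.norm_natCast]
    push_cast; ring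
  rw [hn1]
  have hA : (0:ℝ) ≤ ‖besselCoeff c (κ+1) n * taylorCoeff f (n+1)‖ := norm_nonneg _
  have h1 : ((n:ℝ)+1) ≤ ((n:ℝ)+1)^2 := by nlinarith [Nat.cast_nonneg (α := ℝ) n]
  nlinarith [mul_le_mul_of_nonneg_right h1
    (mul_nonneg hA (by positivity : (0:ℝ) ≤ ‖z‖^n))]

open Filter in
lemma summable_D4 {c κ : ℂ} {f : ℂ → ℂ} (hκre : 0 ≤ κ.re) (hf : InA f) {s : ℝ} (hs : 0 ≤ s) :
    Summable (fun n : ℕ => ((n:ℝ)+1) * ‖besselCoeff c (κ+1) n * taylorCoeff f (n+1)‖ * s^n) := by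
  apply Summable.of_nonneg_of_le (fun n => by positivity) _ (master (c := c) hκre hf hs)
  intro n
  have hA : (0:ℝ) ≤ ‖besselCoeff c (κ+1) n * taylorCoeff f (n+1)‖ := norm_nonneg _
  have h1 : ((n:ℝ)+1) ≤ ((n:ℝ)+1)^2 := by nlinarith [Nat.cast_nonneg (α := ℝ) n]
  nlinarith [mul_le_mul_of_nonneg_right h1
    (mul_nonneg hA (by positivity : (0:ℝ) ≤ s^n))]

open Filter in
lemma summable_D3 {c κ : ℂ} {f : ℂ → ℂ} (hκre : 0 ≤ κ.re) (hκ0 : κ ≠ 0) (hf : InA f) (z : ℂ) :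
    Summable (fun n : ℕ => besselCoeff c κ n * taylorCoeff f (n+1) * z^(n+1)) := by
  have hκpos : 0 < ‖κ‖ := norm_pos_iff.mpr hκ0
  apply Summable.of_norm_bounded
    (((master hκre hf (norm_nonneg z)).mul_right ‖z‖).mul_left (1 + ‖κ‖⁻¹))
  intro n
  have hE : besselCoeff c κ n * taylorCoeff f (n+1) * z^(n+1)
      = ((κ + (n:ℂ))/κ) * (besselCoeff c (κ+1) n * taylorCoeff f (n+1) * z^(n+1)) := by
    have hid := besselCoeff_id (c := c) hκre hκ0 n
    field_simp
    linear_combination (taylorCoeff f (n+1) * z^(n+1)) * hid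
  rw [hE, norm_mul, norm_div]
  have hadd : ‖κ + (n:ℂ)‖ ≤ ‖κ‖ + (n:ℝ) := by
    calc ‖κ + (n:ℂ)‖ ≤ ‖κ‖ + ‖(n:ℂ)‖ := norm_add_le _ _
      _ = ‖κ‖ + (n:ℝ) := by rw [Complex.norm_natCast]
  have h2 : ‖κ + (n:ℂ)‖/‖κ‖ ≤ (1 + ‖κ‖⁻¹) * ((n:ℝ)+1)^2 := by
    rw [div_le_iff₀ hκpos]
    have hn0 : (0:ℝ) ≤ (n:ℝ) := Nat.cast_nonneg n
    have h4 : ‖κ‖⁻¹ * ‖κ‖ * ((n:ℝ)+1)^2 = ((n:ℝ)+1)^2 := by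
      rw [inv_mul_cancel₀ hκpos.ne']; ring
    nlinarith [hadd, h4, hκpos, hn0, sq_nonneg ((n:ℝ))]
  have e2 : ‖besselCoeff c (κ+1) n * taylorCoeff f (n+1) * z^(n+1)‖
      = ‖besselCoeff c (κ+1) n * taylorCoeff f (n+1)‖ * (‖z‖^n * ‖z‖) := by
    rw [norm_mul, norm_pow, pow_succ]
  rw [e2]
  calc ‖κ + (n:ℂ)‖/‖κ‖ * (‖besselCoeff c (κ+1) n * taylorCoeff f (n+1)‖ * (‖z‖^n * ‖z‖))
      ≤ ((1 + ‖κ‖⁻¹) * ((n:ℝ)+1)^2) * (‖besselCoeff c (κ+1) n * taylorCoeff f (n+1)‖ * (‖z‖^n * ‖z‖)) :=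
        mul_le_mul_of_nonneg_right h2 (by positivity)
    _ = (1 + ‖κ‖⁻¹) * (((n:ℝ)+1)^2 * ‖besselCoeff c (κ+1) n * taylorCoeff f (n+1)‖ * ‖z‖^n * ‖z‖) := by
        ring

lemma besselOp_zero (c μ : ℂ) (f : ℂ → ℂ) : besselOp c μ f 0 = 0 := by
  unfold besselOp
  have : ∀ n : ℕ, besselCoeff c μ n * taylorCoeff f (n+1) * (0:ℂ)^(n+1) = 0 := by
    intro n
    rw [zero_pow (Nat.succ_ne_zero n), mul_zero]
  rw [tsum_congr this, tsum_zero]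

open Filter in
lemma besselOp_hasDerivAt {c κ : ℂ} {f : ℂ → ℂ} (hκre : 0 ≤ κ.re) (hf : InA f) (z : ℂ) :
    HasDerivAt (besselOp c (κ+1) f)
      (∑' n : ℕ, ((n:ℂ)+1) * (besselCoeff c (κ+1) n * taylorCoeff f (n+1)) * z^n) z := by
  have hr0 : (0:ℝ) < ‖z‖ + 1 := by positivity
  have h := hasDerivAt_tsum_of_isPreconnected
    (u := fun n : ℕ => ((n:ℝ)+1) * ‖besselCoeff c (κ+1) n * taylorCoeff f (n+1)‖ * (‖z‖+1)^n)
    (g := fun (n : ℕ) (w : ℂ) => besselCoeff c (κ+1) n * taylorCoeff f (n+1) * w^(n+1))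
    (g' := fun (n : ℕ) (w : ℂ) => ((n:ℂ)+1) * (besselCoeff c (κ+1) n * taylorCoeff f (n+1)) * w^n)
    (summable_D4 (c := c) hκre hf hr0.le)
    (Metric.isOpen_ball (x := (0:ℂ)) (ε := ‖z‖+1))
    ((convex_ball (0:ℂ) (‖z‖+1)).isPreconnected)
    ?_ ?_ (Metric.mem_ball_self hr0) ?_ (by rw [mem_ball_zero_iff]; linarith)
  · exact h
  · intro n y _
    have hp := (hasDerivAt_pow (n+1) y).const_mul (besselCoeff c (κ+1) n * taylorCoeff f (n+1))
    convert hp using 1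
    rfl
    simp only [Nat.add_sub_cancel]
    push_cast
    ring
  · intro n y hy
    rw [mem_ball_zero_iff] at hy
    rw [norm_mul, norm_mul, norm_pow]
    have hn1 : ‖((n:ℂ)+1)‖ = (n:ℝ)+1 := by
      rw [show ((n:ℂ)+1) = (((n+1):ℕ):ℂ) by push_cast; ring, Complex.norm_natCast]
      push_cast; ring
    rw [hn1]
    have := pow_le_pow_left₀ (norm_nonneg y) hy.le n
    exact mul_le_mul_of_nonneg_left this (by positivity)
  · exact summable_zero.congr fun n => by simp

open Filter in
lemma besselOp_rec {c κ : ℂ} {f : ℂ → ℂ} (hκre : 0 ≤ κ.re) (hκ0 : κ ≠ 0) (hf : InA f) (z : ℂ) :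
    κ * besselOp c κ f z
      = (∑' n : ℕ, ((n:ℂ)+1) * (besselCoeff c (κ+1) n * taylorCoeff f (n+1)) * z^n) * z
        + (κ - 1) * besselOp c (κ+1) f z := by
  unfold besselOp
  rw [← tsum_mul_left, ← tsum_mul_left, ← tsum_mul_right]
  have h1 : Summable (fun n : ℕ => ((n:ℂ)+1) * (besselCoeff c (κ+1) n * taylorCoeff f (n+1)) * z^n * z) :=
    (summable_D2 (c := c) hκre hf z).mul_right z
  have h2 : Summable (fun n : ℕ => (κ-1) * (besselCoeff c (κ+1) n * taylorCoeff f (n+1) * z^(n+1))) :=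
    (summable_D1 (c := c) hκre hf z).mul_left (κ-1)
  rw [← Summable.tsum_add h1 h2]
  apply tsum_congr
  intro n
  have hid := besselCoeff_id (c := c) hκre hκ0 n
  linear_combination (taylorCoeff f (n+1) * z^(n+1)) * hid

end Cor24Helper

set_option maxHeartbeats 1000000 in
/-- Corollary 2.4. -/
theorem corollary_2_4 (c κ : ℂ) (hκre : 0 ≤ κ.re) (hκ0 : κ ≠ 0)
    (M : ℝ) (hM : 0 < M) (f : ℂ → ℂ) (hf : InA f)
    (h : ∀ z ∈ unitDisk, ‖besselOp c κ f z‖ < M) :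
    ∀ z ∈ unitDisk, ‖besselOp c (κ + 1) f z‖ < M := by
  intro z₀ hz₀
  have hz₀n : ‖z₀‖ < 1 := by rwa [unitDisk, mem_ball_zero_iff] at hz₀
  set g : ℂ → ℂ := besselOp c (κ+1) f with hgdef
  set r : ℝ := (‖z₀‖ + 1)/2 with hrdef
  have hr0 : 0 < r := by rw [hrdef]; positivity
  have hzr : ‖z₀‖ < r := by rw [hrdef]; linarith
  have hr1 : r < 1 := by rw [hrdef]; linarith
  have hgderiv : ∀ w : ℂ, HasDerivAt g
      (∑' n : ℕ, ((n:ℂ)+1) * (besselCoeff c (κ+1) n * taylorCoeff f (n+1)) * w^n) w :=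
    fun w => Cor24Helper.besselOp_hasDerivAt hκre hf w
  have hgdiff : Differentiable ℂ g := fun w => (hgderiv w).differentiableAt
  have hcont : ContinuousOn (fun w => ‖g w‖) (Metric.closedBall (0:ℂ) r) :=
    (hgdiff.continuous.norm).continuousOn
  obtain ⟨z₁, hz₁mem, hz₁max⟩ := (isCompact_closedBall (0:ℂ) r).exists_isMaxOn
    ⟨0, Metric.mem_closedBall_self hr0.le⟩ hcont
  have hmax : ∀ w ∈ Metric.closedBall (0:ℂ) r, ‖g w‖ ≤ ‖g z₁‖ := fun w hw => hz₁max hw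
  set m : ℝ := ‖g z₁‖ with hmdef
  have hz₀mem : z₀ ∈ Metric.closedBall (0:ℂ) r := by
    rw [Metric.mem_closedBall, dist_zero_right]; exact hzr.le
  have hgz₀ : ‖g z₀‖ ≤ m := hmax z₀ hz₀mem
  rcases eq_or_lt_of_le (norm_nonneg (g z₁)) with hm0 | hmpos
  · calc ‖g z₀‖ ≤ m := hgz₀
      _ = 0 := hm0.symm
      _ < M := hM
  -- main case : 0 < m
  have hdOn : DifferentiableOn ℂ g (Metric.ball (0:ℂ) r) := hgdiff.differentiableOn
  have hg0 : g 0 = 0 := Cor24Helper.besselOp_zero c (κ+1) f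
  have schwarz : ∀ w ∈ Metric.ball (0:ℂ) r, ‖g w‖ ≤ m / r * ‖w‖ := by
    intro w hw
    have key : ∀ ε : ℝ, 0 < ε → ‖g w‖ ≤ (m + ε)/r * ‖w‖ := by
      intro ε hε
      have hmaps : Set.MapsTo g (Metric.ball (0:ℂ) r) (Metric.ball (g 0) (m + ε)) := by
        intro x hx
        rw [Metric.mem_ball, hg0, dist_zero_right]
        exact lt_of_le_of_lt (hmax x (Metric.ball_subset_closedBall hx)) (by linarith)
      have h2 := Complex.dist_le_div_mul_dist_of_mapsTo_ball hdOn (hmaps.mono_right Metric.ball_subset_closedBall) hw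
      rw [hg0, dist_zero_right, dist_zero_right] at h2
      exact h2
    have T : Filter.Tendsto (fun ε : ℝ => (m + ε)/r * ‖w‖)
        (nhdsWithin 0 (Set.Ioi 0)) (nhds (m/r*‖w‖)) := by
      have hc : Continuous (fun ε : ℝ => (m + ε)/r * ‖w‖) := by continuity
      have h3 := (hc.tendsto 0).mono_left (nhdsWithin_le_nhds (s := Set.Ioi (0:ℝ)))
      simpa using h3
    exact ge_of_tendsto T (eventually_mem_nhdsWithin.mono (fun ε hε => key ε hε))
  have hz₁r : ‖z₁‖ = r := by
    rw [Metric.mem_closedBall, dist_zero_right] at hz₁mem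
    rcases lt_or_eq_of_le hz₁mem with hlt | heq
    · exfalso
      have h4 := schwarz z₁ (mem_ball_zero_iff.mpr hlt)
      have h5 : m / r * ‖z₁‖ < m / r * r :=
        mul_lt_mul_of_pos_left hlt (div_pos hmpos hr0)
      rw [div_mul_cancel₀ m hr0.ne'] at h5
      rw [← hmdef] at h4
      linarith
    · exact heq
  have hz₁lt1 : ‖z₁‖ < 1 := by rw [hz₁r]; exact hr1
  have hd : HasDerivAt g
      (∑' n : ℕ, ((n:ℂ)+1) * (besselCoeff c (κ+1) n * taylorCoeff f (n+1)) * z₁^n) z₁ :=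
    hgderiv z₁
  set d : ℂ := ∑' n : ℕ, ((n:ℂ)+1) * (besselCoeff c (κ+1) n * taylorCoeff f (n+1)) * z₁^n
    with hddef
  -- Imaginary part of conj (g z₁) * (z₁ * d) vanishes
  have hPim : ((starRingEnd ℂ) (g z₁) * (z₁ * d)).im = 0 := by
    have hcurve : ∀ θ : ℝ, HasDerivAt (fun θ : ℝ => z₁ * Complex.exp ((θ:ℂ) * Complex.I))
        (z₁ * (Complex.exp (((θ:ℝ):ℂ) * Complex.I) * ((1:ℂ) * Complex.I))) θ := by
      intro θ
      have h1 : HasDerivAt (fun θ : ℝ => ((θ:ℝ):ℂ)) 1 θ := by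
        exact Complex.ofRealCLM.hasDerivAt (x := θ)
      exact ((h1.mul_const Complex.I).cexp).const_mul z₁
    set u : ℝ → ℂ := fun θ => g (z₁ * Complex.exp ((θ:ℂ) * Complex.I)) with hudef
    have hu0 : u 0 = g z₁ := by
      rw [hudef]; simp
    have hgat : HasDerivAt g d (z₁ * Complex.exp ((((0:ℝ)):ℂ) * Complex.I)) := by
      rw [show z₁ * Complex.exp ((((0:ℝ)):ℂ) * Complex.I) = z₁ by simp]
      exact hd
    have huderiv : HasDerivAt u
        ((z₁ * (Complex.exp ((((0:ℝ)):ℂ) * Complex.I) * ((1:ℂ) * Complex.I))) • d) 0 :=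
      hd.scomp_of_eq 0 (hcurve 0) (by simp)
    have huderiv' : HasDerivAt u (z₁ * Complex.I * d) 0 := by
      convert huderiv using 1
      simp [smul_eq_mul]
    have hre : HasDerivAt (fun θ => (u θ).re) ((z₁ * Complex.I * d).re) 0 := by
      have h5 := Complex.reCLM.hasFDerivAt.comp_hasDerivAt 0 huderiv'
      exact h5
    have him : HasDerivAt (fun θ => (u θ).im) ((z₁ * Complex.I * d).im) 0 := by
      have h5 := Complex.imCLM.hasFDerivAt.comp_hasDerivAt 0 huderiv'
      exact h5
    have hφ : HasDerivAt (fun θ => (u θ).re * (u θ).re + (u θ).im * (u θ).im)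
        (((z₁ * Complex.I * d).re * (u 0).re + (u 0).re * (z₁ * Complex.I * d).re)
          + ((z₁ * Complex.I * d).im * (u 0).im + (u 0).im * (z₁ * Complex.I * d).im)) 0 :=
      (hre.mul hre).add (him.mul him)
    have hmaxθ : IsLocalMax (fun θ => (u θ).re * (u θ).re + (u θ).im * (u θ).im) 0 := by
      apply Filter.Eventually.of_forall
      intro θ
      have h6 : ‖u θ‖ ≤ m := by
        apply hmax
        rw [Metric.mem_closedBall, dist_zero_right, norm_mul]
        rw [show ‖Complex.exp ((θ:ℂ) * Complex.I)‖ = 1 by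
          exact Complex.norm_exp_ofReal_mul_I θ]
        rw [mul_one, hz₁r]
      have h7 : ‖u θ‖^2 ≤ ‖u 0‖^2 := by
        rw [hu0, ← hmdef]
        exact pow_le_pow_left₀ (norm_nonneg _) h6 2
      have h8 : ∀ w : ℂ, w.re * w.re + w.im * w.im = ‖w‖^2 := by
        intro w
        rw [← Complex.normSq_apply, Complex.sq_norm]
      simp only [h8]
      exact h7
    have hEq := hmaxθ.hasDerivAt_eq_zero hφ
    rw [hu0] at hEq
    have hw : z₁ * Complex.I * d = Complex.I * (z₁ * d) := by ring
    rw [hw] at hEq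
    simp only [Complex.mul_re, Complex.mul_im, Complex.I_re, Complex.I_im] at hEq
    simp only [Complex.mul_im, Complex.mul_re, Complex.conj_re, Complex.conj_im]
    linarith
  -- Real part lower bound
  have hPre : m^2 ≤ ((starRingEnd ℂ) (g z₁) * (z₁ * d)).re := by
    set ψ : ℝ → ℂ := fun t => g (((t:ℝ):ℂ) * z₁) with hψdef
    have hψ1v : ψ 1 = g z₁ := by rw [hψdef]; simp
    have hinner : HasDerivAt (fun t : ℝ => ((t:ℝ):ℂ) * z₁) ((1:ℂ) * z₁) 1 := by
      have h1 : HasDerivAt (fun t : ℝ => ((t:ℝ):ℂ)) 1 1 := by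
        exact Complex.ofRealCLM.hasDerivAt (x := (1:ℝ))
      exact h1.mul_const z₁
    have hψ1 : HasDerivAt ψ (((1:ℂ) * z₁) • d) 1 := hd.scomp_of_eq 1 hinner (by simp)
    have hψ1' : HasDerivAt ψ (z₁ * d) 1 := by
      convert hψ1 using 1
      simp [smul_eq_mul]
    have hslope := hasDerivAt_iff_tendsto_slope.mp hψ1'
    have hT0 := hslope.mono_left
      (nhdsWithin_mono (1:ℝ) (fun x (hx : x ∈ Set.Iio 1) => ne_of_lt hx))
    have hF : Continuous (fun w : ℂ => ((starRingEnd ℂ) (g z₁) * w).re) :=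
      Complex.continuous_re.comp (continuous_const.mul continuous_id)
    have hT : Filter.Tendsto (fun t => ((starRingEnd ℂ) (g z₁) * slope ψ 1 t).re)
        (nhdsWithin 1 (Set.Iio 1)) (nhds (((starRingEnd ℂ) (g z₁) * (z₁ * d)).re)) :=
      (hF.tendsto (z₁ * d)).comp hT0
    apply ge_of_tendsto hT
    filter_upwards [Ioo_mem_nhdsLT_of_mem (show (1:ℝ) ∈ Set.Ioc 0 1 by constructor <;> norm_num)]
      with t ht
    obtain ⟨ht0, ht1⟩ := ht
    have hψt : ‖ψ t‖ ≤ m * t := by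
      have htr : ‖((t:ℝ):ℂ) * z₁‖ = t * r := by
        rw [norm_mul, hz₁r, Complex.norm_real, Real.norm_eq_abs, abs_of_pos ht0]
      have hmem : (((t:ℝ):ℂ) * z₁) ∈ Metric.ball (0:ℂ) r := by
        rw [mem_ball_zero_iff, htr]
        nlinarith
      have h9 := schwarz _ hmem
      rw [htr] at h9
      calc ‖ψ t‖ ≤ m / r * (t * r) := h9
        _ = m * t := by field_simp
    have hq : ((starRingEnd ℂ) (g z₁) * ψ t).re ≤ m^2 * t := by
      calc ((starRingEnd ℂ) (g z₁) * ψ t).re ≤ ‖(starRingEnd ℂ) (g z₁) * ψ t‖ := by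
            exact Complex.re_le_norm _
        _ = m * ‖ψ t‖ := by rw [norm_mul, RCLike.norm_conj, ← hmdef]
        _ ≤ m * (m * t) := mul_le_mul_of_nonneg_left hψt hmpos.le
        _ = m^2 * t := by ring
    have hslope_eq : slope ψ 1 t = (t - 1)⁻¹ • (ψ t - ψ 1) := by
      rw [slope_def_module]
    rw [hslope_eq, mul_smul_comm]
    have hre_smul : (((t - 1)⁻¹ : ℝ) • ((starRingEnd ℂ) (g z₁) * (ψ t - ψ 1))).re
        = (t - 1)⁻¹ * ((starRingEnd ℂ) (g z₁) * (ψ t - ψ 1)).re := by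
      rw [Complex.real_smul, Complex.re_ofReal_mul]
    rw [hre_smul]
    have hsub : ((starRingEnd ℂ) (g z₁) * (ψ t - ψ 1)).re
        = ((starRingEnd ℂ) (g z₁) * ψ t).re - m^2 := by
      rw [hψ1v, mul_sub, Complex.sub_re]
      congr 1
      rw [mul_comm, Complex.mul_conj, Complex.ofReal_re, Complex.normSq_eq_norm_sq,
        ← hmdef]
    rw [hsub]
    rw [show (t - 1)⁻¹ * (((starRingEnd ℂ) (g z₁) * ψ t).re - m ^ 2)
        = (((starRingEnd ℂ) (g z₁) * ψ t).re - m ^ 2) / (t - 1) by rw [div_eq_inv_mul]]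
    rw [le_div_iff_of_neg (by linarith : t - 1 < 0)]
    nlinarith [hq]
  -- Combine with the recurrence
  have hrec := Cor24Helper.besselOp_rec (c := c) hκre hκ0 hf z₁
  rw [show besselOp c (κ+1) f z₁ = g z₁ from rfl, ← hddef] at hrec
  have hconj : (starRingEnd ℂ) (g z₁) * g z₁ = ((m^2 : ℝ) : ℂ) := by
    rw [mul_comm, Complex.mul_conj]
    congr 1
    rw [Complex.normSq_eq_norm_sq, ← hmdef]
  have hW : (starRingEnd ℂ) (g z₁) * (κ * besselOp c κ f z₁)
      = ((starRingEnd ℂ) (g z₁) * (z₁ * d)) + (κ - 1) * ((m^2:ℝ):ℂ) := by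
    rw [hrec]
    linear_combination (κ - 1) * hconj
  have hnorm : m * (‖κ‖ * ‖besselOp c κ f z₁‖)
      = ‖((starRingEnd ℂ) (g z₁) * (z₁ * d)) + (κ - 1) * ((m^2:ℝ):ℂ)‖ := by
    rw [← hW, norm_mul, norm_mul, RCLike.norm_conj, ← hmdef]
  have hterm_re : ((κ - 1) * ((m^2:ℝ):ℂ)).re = (κ.re - 1) * m^2 := by
    rw [Complex.mul_re, Complex.ofReal_re, Complex.ofReal_im, Complex.sub_re, Complex.sub_im,
      Complex.one_re, Complex.one_im]
    ring
  have hterm_im : ((κ - 1) * ((m^2:ℝ):ℂ)).im = κ.im * m^2 := by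
    rw [Complex.mul_im, Complex.ofReal_re, Complex.ofReal_im, Complex.sub_re, Complex.sub_im,
      Complex.one_re, Complex.one_im]
    ring
  have hWre : κ.re * m^2 ≤ (((starRingEnd ℂ) (g z₁) * (z₁ * d)) + (κ - 1) * ((m^2:ℝ):ℂ)).re := by
    rw [Complex.add_re, hterm_re]
    nlinarith [hPre]
  have hWim : (((starRingEnd ℂ) (g z₁) * (z₁ * d)) + (κ - 1) * ((m^2:ℝ):ℂ)).im = κ.im * m^2 := by
    rw [Complex.add_im, hterm_im, hPim]
    ring
  have hWnorm : ‖κ‖ * m^2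
      ≤ ‖((starRingEnd ℂ) (g z₁) * (z₁ * d)) + (κ - 1) * ((m^2:ℝ):ℂ)‖ := by
    have hκsq : ‖κ‖^2 = κ.re^2 + κ.im^2 := by
      rw [Complex.sq_norm, Complex.normSq_apply]; ring
    have hWsq : ‖((starRingEnd ℂ) (g z₁) * (z₁ * d)) + (κ - 1) * ((m^2:ℝ):ℂ)‖^2
        = ((((starRingEnd ℂ) (g z₁) * (z₁ * d)) + (κ - 1) * ((m^2:ℝ):ℂ)).re)^2
          + ((((starRingEnd ℂ) (g z₁) * (z₁ * d)) + (κ - 1) * ((m^2:ℝ):ℂ)).im)^2 := by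
      rw [Complex.sq_norm, Complex.normSq_apply]; ring
    have h2 : (‖κ‖*m^2)^2
        ≤ ‖((starRingEnd ℂ) (g z₁) * (z₁ * d)) + (κ - 1) * ((m^2:ℝ):ℂ)‖^2 := by
      rw [hWsq, hWim, mul_pow]
      nlinarith [hWre, mul_nonneg hκre (sq_nonneg m), hκsq, sq_nonneg (m^2)]
    exact le_of_pow_le_pow_left₀ two_ne_zero (norm_nonneg _) h2
  have hκn : 0 < ‖κ‖ := norm_pos_iff.mpr hκ0
  have hfinal : m ≤ ‖besselOp c κ f z₁‖ := by
    nlinarith [hnorm, hWnorm, hmpos, hκn, mul_pos hκn hmpos]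
  have hz₁disk : z₁ ∈ unitDisk := by
    rw [unitDisk]; exact mem_ball_zero_iff.mpr hz₁lt1
  exact lt_of_le_of_lt hgz₀ (lt_of_le_of_lt hfinal (h z₁ hz₁disk))

end
end

section
/- (Consequence (2.111), generalizing a result of Prajapat) Let c ∈ ℂ, let κ ∈ ℂ with Re(κ) ≥ 0 and κ ≠ 0, and let M > 0. If |φ_{κ,c}(z)| < M for all z ∈ 𝕌, then |φ_{κ+1,c}(z)| < M for all z ∈ 𝕌. -/
open Complex Metric Set

noncomputable section

namespace BesselAux

lemma kn_ne (κ : ℂ) (hκre : 0 ≤ κ.re) (hκ0 : κ ≠ 0) (n : ℕ) : κ + (n : ℂ) ≠ 0 := by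
  cases n with
  | zero => simpa using hκ0
  | succ m =>
    intro hc
    have : (κ + ((m+1 : ℕ) : ℂ)).re = κ.re + (m+1 : ℕ) := by simp
    rw [hc] at this
    simp at this
    have : (0:ℝ) < κ.re + (m+1) := by positivity
    linarith

lemma poch_ne (κ : ℂ) (hκre : 0 ≤ κ.re) (hκ0 : κ ≠ 0) (n : ℕ) :
    (ascPochhammer ℂ n).eval κ ≠ 0 := by
  induction n with
  | zero => simp
  | succ m ih =>
    rw [ascPochhammer_succ_eval]
    exact mul_ne_zero ih (kn_ne κ hκre hκ0 m)

lemma poch_norm_ge (κ : ℂ) (hκre : 0 ≤ κ.re) (n : ℕ) : (n : ℝ) ≤ ‖κ + (n : ℂ)‖ := by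
  have h1 : (κ + (n : ℂ)).re ≤ ‖κ + (n:ℂ)‖ := Complex.re_le_norm _
  have h2 : (κ + (n : ℂ)).re = κ.re + n := by simp
  linarith

lemma coeff_succ (c κ : ℂ) (hκre : 0 ≤ κ.re) (hκ0 : κ ≠ 0) (n : ℕ) :
    besselCoeff c κ (n+1) = besselCoeff c κ n * ((-c) / (4 * (κ + n) * (n+1))) := by
  unfold besselCoeff
  rw [ascPochhammer_succ_eval, Nat.factorial_succ]
  have h1 : ((4:ℂ))^n ≠ 0 := by norm_num
  have h2 := poch_ne κ hκre hκ0 n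
  have h3 : ((n.factorial : ℂ)) ≠ 0 := by exact_mod_cast Nat.factorial_ne_zero n
  have h4 := kn_ne κ hκre hκ0 n
  have h5 : ((n:ℂ)+1) ≠ 0 := by
    have := kn_ne 1 (by norm_num) one_ne_zero n
    simpa [add_comm] using this
  field_simp
  push_cast
  ring

lemma coeff_zero (c κ : ℂ) : besselCoeff c κ 0 = 1 := by
  simp [besselCoeff]

lemma poch_shift (κ : ℂ) (n : ℕ) :
    (ascPochhammer ℂ n).eval κ * (κ + n) = κ * (ascPochhammer ℂ n).eval (κ + 1) := by
  induction n with
  | zero => simp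
  | succ m ih =>
    rw [ascPochhammer_succ_eval, ascPochhammer_succ_eval]
    push_cast
    linear_combination (κ + (m:ℂ) + 1) * ih

lemma coeff_norm_succ (c κ : ℂ) (hκre : 0 ≤ κ.re) (hκ0 : κ ≠ 0) (n : ℕ) :
    ‖besselCoeff c κ (n+1)‖ = ‖besselCoeff c κ n‖ * (‖c‖ / (4 * ‖κ + n‖ * (n+1))) := by
  rw [coeff_succ c κ hκre hκ0 n, norm_mul, norm_div, norm_neg, norm_mul, norm_mul]
  have h1 : ((n:ℂ)+1) = ((n+1:ℕ):ℂ) := by push_cast; ring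
  rw [h1, Complex.norm_natCast, Complex.norm_ofNat]
  push_cast; ring

lemma master_summable (c κ : ℂ) (hκre : 0 ≤ κ.re) (hκ0 : κ ≠ 0) (R : ℝ) (hR : 0 ≤ R) :
    Summable (fun n : ℕ => ‖besselCoeff c κ n‖ * (((n:ℝ)+1)^3 * R^n)) := by
  apply summable_of_ratio_norm_eventually_le (r := 1/2) (by norm_num)
  filter_upwards [Filter.eventually_ge_atTop (max 1 (Nat.ceil (‖c‖ * R)))] with n hn
  have hn1 : (1:ℕ) ≤ n := le_trans (le_max_left _ _) hn
  have hcR : ‖c‖ * R ≤ (n:ℝ) := by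
    have := le_trans (le_max_right _ _) hn
    calc ‖c‖ * R ≤ (Nat.ceil (‖c‖ * R) : ℝ) := Nat.le_ceil _
    _ ≤ (n:ℝ) := by exact_mod_cast this
  have hκn : (n:ℝ) ≤ ‖κ + n‖ := poch_norm_ge κ hκre n
  have hden : (0:ℝ) < 4 * ‖κ + n‖ * (n+1) := by
    have : (0:ℝ) < ‖κ + n‖ := lt_of_lt_of_le (by exact_mod_cast hn1) hκn
    positivity
  have hb : (0:ℝ) ≤ ‖besselCoeff c κ n‖ := norm_nonneg _
  rw [Real.norm_of_nonneg (by positivity), Real.norm_of_nonneg (by positivity),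
    coeff_norm_succ c κ hκre hκ0 n]
  push_cast
  have e0 : ‖besselCoeff c κ n‖ * (‖c‖ / (4 * ‖κ + n‖ * ((n:ℝ)+1))) * (((n:ℝ)+1+1)^3 * R^(n+1))
      = ‖besselCoeff c κ n‖ * ‖c‖ * (((n:ℝ)+1+1)^3 * R^(n+1)) / (4 * ‖κ+(n:ℂ)‖ * ((n:ℝ)+1)) := by
    ring
  rw [e0, div_le_iff₀ hden]
  have key : ‖c‖ * (((n:ℝ)+1+1)^3 * R^(n+1)) ≤ 1/2 * (((n:ℝ)+1)^3 * R^n) * (4 * ‖κ+n‖ * (n+1)) := by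
      have hRp : 0 ≤ R^n := by positivity
      have e1 : ‖c‖ * (((n:ℝ)+1+1)^3 * R^(n+1)) = (‖c‖ * R) * ((n:ℝ)+2)^3 * R^n := by
        ring
      have e2 : 1/2 * (((n:ℝ)+1)^3 * R^n) * (4 * ‖κ+n‖ * ((n:ℝ)+1)) =
          (2 * ‖κ+n‖ * ((n:ℝ)+1)^4) * R^n := by ring
      rw [e1, e2]
      apply mul_le_mul_of_nonneg_right _ hRp
      calc (‖c‖ * R) * ((n:ℝ)+2)^3 ≤ (n:ℝ) * ((n:ℝ)+2)^3 := by
            apply mul_le_mul_of_nonneg_right hcR (by positivity)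
      _ ≤ 2 * (n:ℝ) * ((n:ℝ)+1)^4 := by
            have hn1' : (1:ℝ) ≤ (n:ℝ) := by exact_mod_cast hn1
            nlinarith [hn1', sq_nonneg ((n:ℝ)-1), sq_nonneg ((n:ℝ)+1), pow_nonneg (by linarith : (0:ℝ) ≤ (n:ℝ)) 3]
      _ ≤ 2 * ‖κ+n‖ * ((n:ℝ)+1)^4 := by
            have hp : (0:ℝ) ≤ ((n:ℝ)+1)^4 := by positivity
            nlinarith [mul_le_mul_of_nonneg_right hκn hp]
  calc ‖besselCoeff c κ n‖ * ‖c‖ * (((n:ℝ)+1+1)^3 * R^(n+1))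
      = ‖besselCoeff c κ n‖ * (‖c‖ * (((n:ℝ)+1+1)^3 * R^(n+1))) := by ring
  _ ≤ ‖besselCoeff c κ n‖ * (1/2 * (((n:ℝ)+1)^3 * R^n) * (4 * ‖κ+n‖ * ((n:ℝ)+1))) :=
      mul_le_mul_of_nonneg_left key hb
  _ = 1/2 * (‖besselCoeff c κ n‖ * (((n:ℝ)+1)^3 * R^n)) * (4 * ‖κ+(n:ℂ)‖ * ((n:ℝ)+1)) := by ring

/-- abstract power series as tsum -/
def qs (f : ℕ → ℂ) (z : ℂ) : ℂ := ∑' n : ℕ, f n * z^n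

lemma weight_ge_one (n : ℕ) : (1:ℝ) ≤ ((n:ℝ)+1)^3 := by
  have : (1:ℝ) ≤ (n:ℝ)+1 := by linarith [Nat.cast_nonneg (α := ℝ) n]
  calc (1:ℝ) = 1^3 := by norm_num
  _ ≤ ((n:ℝ)+1)^3 := by gcongr

lemma qs_summable (f : ℕ → ℂ)
    (hf : ∀ R : ℝ, 0 ≤ R → Summable fun n : ℕ => ‖f n‖ * (((n:ℝ)+1)^3 * R^n)) (z : ℂ) :
    Summable (fun n : ℕ => f n * z^n) := by
  apply Summable.of_norm_bounded (hf ‖z‖ (norm_nonneg z))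
  intro n
  rw [norm_mul, norm_pow]
  have h2 : (0:ℝ) ≤ ‖z‖^n := by positivity
  have h3 := weight_ge_one n
  exact mul_le_mul_of_nonneg_left (le_mul_of_one_le_left h2 h3) (norm_nonneg _)

lemma qs_zero (f : ℕ → ℂ) : qs f 0 = f 0 := by
  unfold qs
  rw [tsum_eq_single 0 (fun n hn => by simp [zero_pow hn])]
  simp

lemma qs_summable_zero (f : ℕ → ℂ) : Summable (fun n : ℕ => f n * (0:ℂ)^n) := by
  apply summable_of_ne_finset_zero (s := {0})
  intro n hn
  simp at hn
  simp [zero_pow hn]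

lemma qs_hasDerivAt (f : ℕ → ℂ)
    (hf : ∀ R : ℝ, 0 ≤ R → Summable fun n : ℕ => ‖f n‖ * (((n:ℝ)+1)^3 * R^n)) (z : ℂ) :
    HasDerivAt (qs f) (∑' n : ℕ, f n * ((n:ℂ) * z^(n-1))) z := by
  have hR1 : (1:ℝ) ≤ ‖z‖ + 1 := by linarith [norm_nonneg z]
  have hR0 : (0:ℝ) ≤ ‖z‖ + 1 := by positivity
  apply hasDerivAt_tsum_of_isPreconnected (hf (‖z‖+1) hR0) isOpen_ball
    ((convex_ball (0:ℂ) (‖z‖+1)).isPreconnected)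
    (fun n w _ => (hasDerivAt_pow n w).const_mul (f n))
    (g := fun n w => f n * w^n) (y₀ := 0)
  · intro n w hw
    rw [mem_ball_zero_iff] at hw
    rw [norm_mul, norm_mul, norm_pow, Complex.norm_natCast]
    have h1 : ‖w‖^(n-1) ≤ (‖z‖+1)^n := by
      calc ‖w‖^(n-1) ≤ (‖z‖+1)^(n-1) := by
            apply pow_le_pow_left₀ (norm_nonneg w) hw.le
      _ ≤ (‖z‖+1)^n := pow_le_pow_right₀ hR1 (Nat.sub_le n 1)
    have h2 : (n:ℝ) ≤ ((n:ℝ)+1)^3 := by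
      nlinarith [Nat.cast_nonneg (α := ℝ) n, sq_nonneg ((n:ℝ)),
        pow_nonneg (Nat.cast_nonneg (α := ℝ) n) 3]
    have h3 : (0:ℝ) ≤ (‖z‖+1)^n := by positivity
    calc ‖f n‖ * ((n:ℝ) * ‖w‖^(n-1)) ≤ ‖f n‖ * (((n:ℝ)+1)^3 * (‖z‖+1)^n) := by
          apply mul_le_mul_of_nonneg_left _ (norm_nonneg _)
          have := Nat.cast_nonneg (α := ℝ) n
          nlinarith [mul_le_mul_of_nonneg_left h1 this]
    _ = _ := by ring
  · exact mem_ball_zero_iff.mpr (by simpa using lt_of_lt_of_le one_pos hR1)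
  · exact qs_summable_zero f
  · exact mem_ball_zero_iff.mpr (by linarith)

lemma qs_differentiable (f : ℕ → ℂ)
    (hf : ∀ R : ℝ, 0 ≤ R → Summable fun n : ℕ => ‖f n‖ * (((n:ℝ)+1)^3 * R^n)) :
    Differentiable ℂ (qs f) := fun z => (qs_hasDerivAt f hf z).differentiableAt

lemma z_mul_deriv (f : ℕ → ℂ) (z : ℂ) :
    z * (∑' n : ℕ, f n * ((n:ℂ) * z^(n-1))) = ∑' n : ℕ, (n:ℂ) * f n * z^n := by
  rw [← tsum_mul_left]
  apply tsum_congr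
  intro n
  cases n with
  | zero => simp
  | succ m =>
    simp only [Nat.add_sub_cancel]
    push_cast
    ring


lemma master_summable4 (c κ : ℂ) (hκre : 0 ≤ κ.re) (hκ0 : κ ≠ 0) (R : ℝ) (hR : 0 ≤ R) :
    Summable (fun n : ℕ => ‖besselCoeff c κ n‖ * (((n:ℝ)+1)^4 * R^n)) := by
  apply Summable.of_nonneg_of_le (fun n => by positivity) _
    (master_summable c κ hκre hκ0 (2*R) (by linarith))
  intro n
  have h1 : ((n:ℝ)+1) ≤ 2^n := by
    have := Nat.lt_two_pow_self (n := n)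
    have : (n+1:ℕ) ≤ 2^n := this
    exact_mod_cast this
  calc ‖besselCoeff c κ n‖ * (((n:ℝ)+1)^4 * R^n)
      = ‖besselCoeff c κ n‖ * (((n:ℝ)+1)^3 * (((n:ℝ)+1) * R^n)) := by ring
  _ ≤ ‖besselCoeff c κ n‖ * (((n:ℝ)+1)^3 * ((2:ℝ)^n * R^n)) := by
      have hp : (0:ℝ) ≤ R^n := by positivity
      have h0 : (0:ℝ) ≤ ((n:ℝ)+1)^3 := by positivity
      have := mul_le_mul_of_nonneg_right h1 hp
      exact mul_le_mul_of_nonneg_left (mul_le_mul_of_nonneg_left this h0) (norm_nonneg _)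
  _ = ‖besselCoeff c κ n‖ * (((n:ℝ)+1)^3 * (2*R)^n) := by rw [mul_pow]

lemma bessel_hf (c κ : ℂ) (hκre : 0 ≤ κ.re) (hκ0 : κ ≠ 0) :
    ∀ R : ℝ, 0 ≤ R →
      Summable fun n : ℕ => ‖besselCoeff c κ n‖ * (((n:ℝ)+1)^3 * R^n) :=
  fun R hR => master_summable c κ hκre hκ0 R hR

lemma bessel_hf' (c κ : ℂ) (hκre : 0 ≤ κ.re) (hκ0 : κ ≠ 0) :
    ∀ R : ℝ, 0 ≤ R →
      Summable fun n : ℕ => ‖(n:ℂ) * besselCoeff c κ n‖ * (((n:ℝ)+1)^3 * R^n) := by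
  intro R hR
  apply Summable.of_nonneg_of_le (fun n => by positivity) _
    (master_summable4 c κ hκre hκ0 R hR)
  intro n
  rw [norm_mul, Complex.norm_natCast]
  have hp : (0:ℝ) ≤ R^n := by positivity
  have hb : (0:ℝ) ≤ ‖besselCoeff c κ n‖ := norm_nonneg _
  have h2 : (n:ℝ) * ((n:ℝ)+1)^3 ≤ ((n:ℝ)+1)^4 := by
    have h0 : (0:ℝ) ≤ ((n:ℝ)+1)^3 := by positivity
    nlinarith [Nat.cast_nonneg (α := ℝ) n]
  calc (n:ℝ) * ‖besselCoeff c κ n‖ * (((n:ℝ)+1)^3 * R^n)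
      = ‖besselCoeff c κ n‖ * (((n:ℝ) * ((n:ℝ)+1)^3) * R^n) := by ring
  _ ≤ ‖besselCoeff c κ n‖ * (((n:ℝ)+1)^4 * R^n) := by
      exact mul_le_mul_of_nonneg_left (mul_le_mul_of_nonneg_right h2 hp) hb

lemma coeff_split (c κ : ℂ) (hκre : 0 ≤ κ.re) (hκ0 : κ ≠ 0) (n : ℕ) :
    besselCoeff c κ n = besselCoeff c (κ+1) n + (n:ℂ) * besselCoeff c (κ+1) n / κ := by
  have hre1 : 0 ≤ (κ+1).re := by simp; linarith
  have hne1 : κ + 1 ≠ 0 := by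
    intro hc
    have : (κ+1).re = 0 := by rw [hc]; simp
    simp at this
    linarith
  have h1 : ((4:ℂ))^n ≠ 0 := by norm_num
  have h2 := poch_ne κ hκre hκ0 n
  have h2' := poch_ne (κ+1) hre1 hne1 n
  have h3 : ((n.factorial : ℂ)) ≠ 0 := by exact_mod_cast Nat.factorial_ne_zero n
  have h4 := poch_shift κ n
  have key : besselCoeff c κ n = besselCoeff c (κ+1) n * ((κ + n)/κ) := by
    unfold besselCoeff
    rw [div_mul_div_comm, div_eq_div_iff (by exact mul_ne_zero (mul_ne_zero h1 h2) h3)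
      (mul_ne_zero (mul_ne_zero (mul_ne_zero h1 h2') h3) hκ0)]
    linear_combination (-((-c)^n * (4:ℂ)^n * (n.factorial : ℂ))) * h4
  rw [key]
  field_simp

lemma hasDerivAt_normSq_comp {f : ℝ → ℂ} {f' : ℂ} {t : ℝ} (hf : HasDerivAt f f' t) :
    HasDerivAt (fun s => Complex.normSq (f s)) (2 * ((starRingEnd ℂ) (f t) * f').re) t := by
  have hre : HasDerivAt (fun s => (f s).re) f'.re t := by
    exact Complex.reCLM.hasFDerivAt.comp_hasDerivAt t hf
  have him : HasDerivAt (fun s => (f s).im) f'.im t := by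
    exact Complex.imCLM.hasFDerivAt.comp_hasDerivAt t hf
  have h := (hre.mul hre).add (him.mul him)
  have e1 : (fun s => Complex.normSq (f s)) =
      fun s => (f s).re * (f s).re + (f s).im * (f s).im := by
    funext s; rw [Complex.normSq_apply]
  rw [e1]
  refine h.congr_deriv ?_
  simp [Complex.mul_re]
  ring

lemma normSq_mono {x y : ℂ} (h : ‖x‖ ≤ ‖y‖) : Complex.normSq x ≤ Complex.normSq y := by
  rw [← Complex.sq_norm, ← Complex.sq_norm]
  nlinarith [norm_nonneg x, norm_nonneg y]
end BesselAux


namespace BesselAux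

lemma genBessel_eq_qs (c κ z : ℂ) : genBessel κ c z = z * qs (besselCoeff c κ) z := by
  unfold genBessel qs
  rw [← tsum_mul_left]
  apply tsum_congr
  intro n
  rw [pow_succ]
  ring

end BesselAux


open BesselAux in
/-- Consequence (2.111), generalizing a result of Prajapat. -/
theorem genBessel_bound (c κ : ℂ) (hκre : 0 ≤ κ.re) (hκ0 : κ ≠ 0)
    (M : ℝ) (hM : 0 < M)
    (h : ∀ z ∈ unitDisk, ‖genBessel κ c z‖ < M) :
    ∀ z ∈ unitDisk, ‖genBessel (κ + 1) c z‖ < M := by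
  classical
  have hre1 : 0 ≤ (κ+1).re := by simp; linarith
  have hne1 : κ + 1 ≠ 0 := by
    intro hc
    have : (κ+1).re = 0 := by rw [hc]; simp
    simp at this; linarith
  have hfb := bessel_hf c (κ+1) hre1 hne1
  have hfa := bessel_hf c κ hκre hκ0
  have hfnb := bessel_hf' c (κ+1) hre1 hne1
  set b : ℕ → ℂ := besselCoeff c (κ+1) with hbdef
  set q : ℂ → ℂ := qs b with hqdef
  set q1 : ℂ → ℂ := qs (fun n => (n:ℂ) * b n) with hq1def
  set Q : ℂ → ℂ := qs (besselCoeff c κ) with hQdef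
  have hqdiff : Differentiable ℂ q := qs_differentiable b hfb
  have hQdiff : Differentiable ℂ Q := qs_differentiable (besselCoeff c κ) hfa
  have hq0 : q 0 = 1 := by rw [hqdef, qs_zero]; exact coeff_zero c (κ+1)
  have hQ0 : Q 0 = 1 := by rw [hQdef, qs_zero]; exact coeff_zero c κ
  -- Q = q + q1/κ
  have hQeq : ∀ z : ℂ, Q z = q z + q1 z / κ := by
    intro z
    rw [hQdef, hqdef, hq1def]
    unfold qs
    calc ∑' n : ℕ, besselCoeff c κ n * z^n
        = ∑' n : ℕ, (b n * z^n + (((n:ℂ) * b n) * z^n)/κ) := by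
          apply tsum_congr
          intro n
          rw [hbdef, coeff_split c κ hκre hκ0 n]
          ring
    _ = (∑' n : ℕ, b n * z^n) + ∑' n : ℕ, (((n:ℂ) * b n) * z^n)/κ :=
          Summable.tsum_add (qs_summable b hfb z)
            (Summable.div_const (qs_summable (fun n => (n:ℂ) * b n) hfnb z) κ)
    _ = (∑' n : ℕ, b n * z^n) + (∑' n : ℕ, ((n:ℂ) * b n) * z^n)/κ := by
          rw [tsum_div_const]
  -- Step B : ‖Q‖ ≤ M on the unit disk
  have hQle : ∀ z ∈ Metric.ball (0:ℂ) 1, ‖Q z‖ ≤ M := by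
    intro z hz
    rw [mem_ball_zero_iff] at hz
    refine le_of_forall_pos_le_add (fun ε hε => ?_)
    set r : ℝ := max (M/(M+ε)) ((‖z‖+1)/2) with hrdef
    have hr0 : 0 < r := lt_of_lt_of_le (by positivity) (le_max_left _ _)
    have hr1 : r < 1 := by
      apply max_lt
      · rw [div_lt_one (by linarith)]; linarith
      · have := norm_nonneg z; linarith
    have hzr : ‖z‖ < r := lt_of_lt_of_le (by linarith) (le_max_right _ _)
    have hbound : ∀ w ∈ frontier (Metric.ball (0:ℂ) r), ‖Q w‖ ≤ M / r := by
      intro w hw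
      rw [frontier_ball (0:ℂ) hr0.ne'] at hw
      rw [mem_sphere_zero_iff_norm] at hw
      have hwin : w ∈ unitDisk := by
        rw [unitDisk, mem_ball_zero_iff, hw]; exact hr1
      have h1 : ‖genBessel κ c w‖ < M := h w hwin
      rw [genBessel_eq_qs, norm_mul, hw] at h1
      rw [le_div_iff₀ hr0]
      nlinarith [h1]
    have hcl : z ∈ closure (Metric.ball (0:ℂ) r) := by
      rw [closure_ball (0:ℂ) hr0.ne', mem_closedBall_zero_iff]
      exact hzr.le
    have hle := Complex.norm_le_of_forall_mem_frontier_norm_le isBounded_ball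
      (hQdiff.diffContOnCl) hbound hcl
    have h5 : M / r ≤ M + ε := by
      rw [div_le_iff₀ hr0]
      have h6 : M/(M+ε) ≤ r := le_max_left _ _
      have h7 : (0:ℝ) < M + ε := by linarith
      have h8 : (M+ε) * (M/(M+ε)) = M := by field_simp
      nlinarith [mul_le_mul_of_nonneg_left h6 h7.le]
    linarith
  have hM1 : (1:ℝ) ≤ M := by
    have h0 : (0:ℂ) ∈ Metric.ball (0:ℂ) 1 := by simp
    have := hQle 0 h0
    rw [hQ0] at this
    simpa using this
  -- Step C : ‖q‖ ≤ M on the unit disk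
  have hqle : ∀ z ∈ Metric.ball (0:ℂ) 1, ‖q z‖ ≤ M := by
    by_contra hcon
    push_neg at hcon
    obtain ⟨z₁, hz₁mem, hz₁⟩ := hcon
    rw [mem_ball_zero_iff] at hz₁mem
    set r : ℝ := ‖z₁‖ with hrdef
    have hz₁0 : z₁ ≠ 0 := by
      intro h0
      rw [h0, hq0] at hz₁
      simp at hz₁
      linarith
    have hr0 : 0 < r := norm_pos_iff.mpr hz₁0
    have hr1 : r < 1 := hz₁mem
    have hsne : (Metric.sphere (0:ℂ) r).Nonempty :=
      ⟨z₁, mem_sphere_zero_iff_norm.mpr hrdef.symm⟩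
    obtain ⟨z₀, hz₀s, hz₀max⟩ := (isCompact_sphere (0:ℂ) r).exists_isMaxOn hsne
      (hqdiff.continuous.norm.continuousOn)
    have hz₀n : ‖z₀‖ = r := mem_sphere_zero_iff_norm.mp hz₀s
    have hmaxcb : ∀ w ∈ Metric.closedBall (0:ℂ) r, ‖q w‖ ≤ ‖q z₀‖ := by
      intro w hw
      apply Complex.norm_le_of_forall_mem_frontier_norm_le isBounded_ball
        (hqdiff.diffContOnCl)
      · intro u hu
        rw [frontier_ball (0:ℂ) hr0.ne'] at hu
        exact hz₀max hu
      · rwa [closure_ball (0:ℂ) hr0.ne']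
    have hMlt : M < ‖q z₀‖ := by
      refine lt_of_lt_of_le hz₁ (hmaxcb z₁ ?_)
      rw [mem_closedBall_zero_iff]
    have hqz₀ : q z₀ ≠ 0 := by
      intro h0
      rw [h0] at hMlt
      simp at hMlt
      linarith
    have hnormSqpos : 0 < Complex.normSq (q z₀) := Complex.normSq_pos.mpr hqz₀
    have hD : HasDerivAt q (∑' n : ℕ, b n * ((n:ℂ) * z₀^(n-1))) z₀ := qs_hasDerivAt b hfb z₀
    set D : ℂ := ∑' n : ℕ, b n * ((n:ℂ) * z₀^(n-1)) with hDdef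
    have hzD : z₀ * D = q1 z₀ := z_mul_deriv b z₀
    set A : ℂ := (starRingEnd ℂ) (q z₀) * (z₀ * D) with hAdef
    -- Claim 1 : A.im = 0 (angular derivative test)
    have claim1 : A.im = 0 := by
      have hgin : HasDerivAt (fun w : ℂ => z₀ * Complex.exp (w * Complex.I))
          (z₀ * Complex.I) 0 := by
        have h1 : HasDerivAt (fun w : ℂ => w * Complex.I) Complex.I (0:ℂ) := by
          simpa using (hasDerivAt_id (0:ℂ)).mul_const Complex.I
        have h2 := (h1.cexp).const_mul z₀
        simpa using h2
      have hDz : HasDerivAt q D (z₀ * Complex.exp ((0:ℂ) * Complex.I)) := by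
        have h00 : z₀ * Complex.exp ((0:ℂ) * Complex.I) = z₀ := by simp
        rwa [h00]
      have hcomp : HasDerivAt (fun w : ℂ => q (z₀ * Complex.exp (w * Complex.I)))
          (D * (z₀ * Complex.I)) 0 :=
          hDz.comp (h := fun w : ℂ => z₀ * Complex.exp (w * Complex.I)) 0 hgin
      have hcomp' : HasDerivAt (fun w : ℂ => q (z₀ * Complex.exp (w * Complex.I)))
          (D * (z₀ * Complex.I)) (((0:ℝ)):ℂ) := by rwa [Complex.ofReal_zero]
      have hreal : HasDerivAt (fun θ : ℝ => q (z₀ * Complex.exp ((θ:ℂ) * Complex.I)))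
          (D * (z₀ * Complex.I)) 0 := hcomp'.comp_ofReal
      have hφ := hasDerivAt_normSq_comp hreal
      have hloc : IsLocalMax
          (fun θ : ℝ => Complex.normSq (q (z₀ * Complex.exp ((θ:ℂ) * Complex.I)))) 0 := by
        apply Filter.Eventually.of_forall
        intro θ
        have hmem : z₀ * Complex.exp ((θ:ℂ) * Complex.I) ∈ Metric.closedBall (0:ℂ) r := by
          rw [mem_closedBall_zero_iff, norm_mul, hz₀n]
          have he1 : ‖Complex.exp ((θ:ℂ) * Complex.I)‖ = 1 := by
            rw [Complex.norm_exp_ofReal_mul_I]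
          rw [he1, mul_one]
        have h1 := hmaxcb _ hmem
        have h02 : (fun θ : ℝ => Complex.normSq (q (z₀ * Complex.exp ((θ:ℂ) * Complex.I)))) 0
            = Complex.normSq (q z₀) := by
          norm_num
        rw [h02]
        exact normSq_mono h1
      have hder0 : 2 * ((starRingEnd ℂ)
          (q (z₀ * Complex.exp ((((0:ℝ)):ℂ) * Complex.I))) * (D * (z₀ * Complex.I))).re = 0 :=
        hloc.hasDerivAt_eq_zero hφ
      have he : (starRingEnd ℂ) (q (z₀ * Complex.exp ((((0:ℝ)):ℂ) * Complex.I)))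
          * (D * (z₀ * Complex.I)) = A * Complex.I := by
        have h00 : z₀ * Complex.exp ((((0:ℝ)):ℂ) * Complex.I) = z₀ := by simp
        rw [h00, hAdef]
        ring
      rw [he, Complex.mul_I_re] at hder0
      linarith
    -- Claim 2 : 0 ≤ A.re (radial derivative test)
    have claim2 : 0 ≤ A.re := by
      have hgin : HasDerivAt (fun w : ℂ => w * z₀) z₀ (1:ℂ) := by
        simpa using (hasDerivAt_id (1:ℂ)).mul_const z₀
      have hDz : HasDerivAt q D ((1:ℂ) * z₀) := by rwa [one_mul]
      have hcomp : HasDerivAt (fun w : ℂ => q (w * z₀)) (D * z₀) 1 :=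
        hDz.comp (h := fun w : ℂ => w * z₀) 1 hgin
      have hcomp' : HasDerivAt (fun w : ℂ => q (w * z₀)) (D * z₀) (((1:ℝ)):ℂ) := by
        rwa [Complex.ofReal_one]
      have hreal : HasDerivAt (fun t : ℝ => q ((t:ℂ) * z₀)) (D * z₀) 1 := hcomp'.comp_ofReal
      have hφ0 := hasDerivAt_normSq_comp hreal
      have hval : (starRingEnd ℂ) (q ((((1:ℝ)):ℂ) * z₀)) * (D * z₀) = A := by
        have h11 : ((((1:ℝ)):ℂ)) * z₀ = z₀ := by norm_num
        rw [h11, hAdef]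
        ring
      rw [hval] at hφ0
      -- hφ0 : HasDerivAt (fun t : ℝ => normSq (q (↑t * z₀))) (2 * A.re) 1
      have hineq : ∀ t ∈ Set.Ioo (0:ℝ) 1,
          Complex.normSq (q ((t:ℂ) * z₀)) ≤ Complex.normSq (q ((((1:ℝ)):ℂ) * z₀)) := by
        intro t ht
        have hmem : ((t:ℝ):ℂ) * z₀ ∈ Metric.closedBall (0:ℂ) r := by
          rw [mem_closedBall_zero_iff, norm_mul, hz₀n]
          have he1 : ‖((t:ℝ):ℂ)‖ = |t| := by
            rw [Complex.norm_real, Real.norm_eq_abs]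
          rw [he1, abs_of_pos ht.1]
          nlinarith [ht.1, ht.2, hr0]
        have h1 : ‖q (((t:ℝ):ℂ) * z₀)‖ ≤ ‖q z₀‖ := hmaxcb _ hmem
        have h2 : ((((1:ℝ)):ℂ)) * z₀ = z₀ := by norm_num
        rw [h2]
        exact normSq_mono h1
      have hsl := hφ0.hasDerivWithinAt (s := Set.Iio (1:ℝ))
      rw [hasDerivWithinAt_iff_tendsto_slope] at hsl
      have hsetid : Set.Iio (1:ℝ) \ {1} = Set.Iio (1:ℝ) := by
        apply Set.diff_singleton_eq_self
        simp
      rw [hsetid] at hsl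
      have hev : ∀ᶠ t in nhdsWithin (1:ℝ) (Set.Iio 1),
          0 ≤ slope (fun t : ℝ => Complex.normSq (q ((t:ℂ) * z₀))) 1 t := by
        have hIoo : Set.Ioo (0:ℝ) 1 ∈ nhdsWithin (1:ℝ) (Set.Iio 1) := by
          rw [← Set.Ioi_inter_Iio]
          exact Filter.inter_mem (mem_nhdsWithin_of_mem_nhds (Ioi_mem_nhds one_pos))
            self_mem_nhdsWithin
        filter_upwards [hIoo] with t ht
        have h2' : ((((1:ℝ)):ℂ)) * z₀ = z₀ := by norm_num
        have h1 : Complex.normSq (q ((t:ℂ) * z₀)) - Complex.normSq (q ((((1:ℝ)):ℂ) * z₀)) ≤ 0 :=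
          sub_nonpos.mpr (hineq t ht)
        have h2 : t - 1 < 0 := by linarith [ht.2]
        rw [slope_def_field]
        apply div_nonneg_iff.mpr
        right
        exact ⟨by simpa using h1, h2.le⟩
      have hge : (0:ℝ) ≤ 2 * A.re := ge_of_tendsto hsl hev
      linarith
    -- assemble the contradiction
    set k : ℝ := A.re / Complex.normSq (q z₀) with hkdef
    have hk0 : 0 ≤ k := div_nonneg claim2 (Complex.normSq_nonneg _)
    have hAre : A = (A.re : ℂ) := by
      apply Complex.ext
      · simp
      · simp [claim1]
    have h2 : (Complex.normSq (q z₀) : ℂ) * (z₀ * D) = (A.re:ℂ) * q z₀ := by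
      have h1 : q z₀ * A = q z₀ * (A.re:ℂ) := by rw [← hAre]
      rw [hAdef] at h1
      calc (Complex.normSq (q z₀) : ℂ) * (z₀ * D)
          = q z₀ * ((starRingEnd ℂ) (q z₀) * (z₀ * D)) := by
            rw [← Complex.mul_conj]; ring
      _ = q z₀ * (A.re:ℂ) := h1
      _ = (A.re:ℂ) * q z₀ := by ring
    have hnz : (Complex.normSq (q z₀) : ℂ) ≠ 0 := by
      exact_mod_cast hnormSqpos.ne'
    have hkz : z₀ * D = (k:ℂ) * q z₀ := by
      rw [hkdef, Complex.ofReal_div, div_mul_eq_mul_div, eq_div_iff hnz]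
      linear_combination h2
    have hQz₀ : Q z₀ = q z₀ * ((κ + (k:ℂ))/κ) := by
      rw [hQeq z₀, ← hzD, hkz]
      field_simp
    have hκpos : 0 < ‖κ‖ := norm_pos_iff.mpr hκ0
    have hnormκ : ‖κ‖ ≤ ‖κ + (k:ℂ)‖ := by
      have h1 : Complex.normSq κ ≤ Complex.normSq (κ + (k:ℂ)) := by
        simp only [Complex.normSq_apply, Complex.add_re, Complex.add_im, Complex.ofReal_re,
          Complex.ofReal_im, add_zero]
        nlinarith [hk0, hκre]
      have e1 : ‖κ‖^2 = Complex.normSq κ := by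
        rw [Complex.sq_norm]
      have e2 : ‖κ + (k:ℂ)‖^2 = Complex.normSq (κ + (k:ℂ)) := by
        rw [Complex.sq_norm]
      nlinarith [norm_nonneg (κ + (k:ℂ)), norm_nonneg κ]
    have hQge : ‖q z₀‖ ≤ ‖Q z₀‖ := by
      rw [hQz₀, norm_mul, norm_div]
      have h1 : 1 ≤ ‖κ + (k:ℂ)‖ / ‖κ‖ := (one_le_div hκpos).mpr hnormκ
      nlinarith [norm_nonneg (q z₀)]
    have hfin := hQle z₀ (by rw [mem_ball_zero_iff, hz₀n]; exact hr1)
    linarith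
  -- conclusion
  intro z hz
  rw [unitDisk, mem_ball_zero_iff] at hz
  rw [genBessel_eq_qs, norm_mul]
  have h1 : ‖q z‖ ≤ M := hqle z (mem_ball_zero_iff.mpr hz)
  have h2 : ‖z‖ * ‖q z‖ ≤ ‖z‖ * M := mul_le_mul_of_nonneg_left h1 (norm_nonneg z)
  have h3 : ‖z‖ * M < M := by nlinarith [norm_nonneg z]
  linarith

end
end

section
/- (Consequence (4.10), answering the open problem of Andras and Baricz) Let c ∈ ℂ, let κ ∈ ℂ with Re(κ) ≥ −1/2 and κ ∉ {0, −1, −2, …}, and let M > 0. If |φ_{κ,c}(z)/z − 1| < M for all z ∈ 𝕌, then |φ_{κ+1,c}(z)/z − 1| < M for all z ∈ 𝕌, where φ_{μ,c}(z)/z is understood as its analytic extension to 𝕌 with value 1 at z = 0. -/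
open Complex Metric Set

noncomputable section

section AuxProofs
open Polynomial Filter Topology

lemma poch_ne_zero {μ : ℂ} (hμ : ∀ n : ℕ, μ ≠ -(n : ℂ)) (n : ℕ) :
    (ascPochhammer ℂ n).eval μ ≠ 0 := by
  induction n with
  | zero => simp
  | succ n ih =>
    rw [ascPochhammer_succ_eval]
    refine mul_ne_zero ih fun h => hμ n (by linear_combination h)

lemma besselCoeff_zero (c μ : ℂ) : besselCoeff c μ 0 = 1 := by
  simp [besselCoeff]

lemma besselCoeff_succ (c : ℂ) {μ : ℂ} (hμ : ∀ n : ℕ, μ ≠ -(n : ℂ)) (n : ℕ) :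
    besselCoeff c μ (n + 1) = besselCoeff c μ n * (-c) / (4 * (μ + n) * ((n : ℂ) + 1)) := by
  have h1 : ((4:ℂ))^n ≠ 0 := by norm_num
  have h2 := poch_ne_zero hμ n
  have h3 : ((n.factorial : ℂ)) ≠ 0 := Nat.cast_ne_zero.2 n.factorial_ne_zero
  have h4 : (μ + n) ≠ 0 := fun h => hμ n (by linear_combination h)
  have h5 : ((n:ℂ) + 1) ≠ 0 := Nat.cast_add_one_ne_zero n
  unfold besselCoeff
  rw [ascPochhammer_succ_eval, pow_succ, pow_succ, Nat.factorial_succ]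
  push_cast
  field_simp

lemma poch_shift (κ : ℂ) (n : ℕ) :
    κ * (ascPochhammer ℂ n).eval (κ + 1) = (ascPochhammer ℂ n).eval κ * (κ + n) := by
  induction n with
  | zero => simp
  | succ n ih =>
    rw [ascPochhammer_succ_eval, ascPochhammer_succ_eval]
    push_cast
    linear_combination (κ + 1 + n) * ih

lemma besselCoeff_step (c : ℂ) {κ : ℂ} (hκ : ∀ n : ℕ, κ ≠ -(n : ℂ))
    (hκ1 : ∀ n : ℕ, κ + 1 ≠ -(n : ℂ)) (n : ℕ) :
    (κ + n) * besselCoeff c (κ + 1) n = κ * besselCoeff c κ n := by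
  have h1 : ((4:ℂ))^n ≠ 0 := by norm_num
  have h2 := poch_ne_zero hκ n
  have h2' := poch_ne_zero hκ1 n
  have h3 : ((n.factorial : ℂ)) ≠ 0 := Nat.cast_ne_zero.2 n.factorial_ne_zero
  unfold besselCoeff
  field_simp
  linear_combination (-((-c)^n)) * poch_shift κ n

lemma besselNorm_succ (c : ℂ) {μ : ℂ} (hμ : ∀ n : ℕ, μ ≠ -(n : ℂ)) (n : ℕ) :
    ‖besselCoeff c μ (n + 1)‖ = ‖besselCoeff c μ n‖ * ‖c‖ / (4 * ‖μ + n‖ * ((n:ℝ) + 1)) := by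
  have : ((n:ℂ) + 1) = ((n+1 : ℕ) : ℂ) := by push_cast; ring
  rw [besselCoeff_succ c hμ n, this, norm_div, norm_mul, norm_mul, norm_mul, norm_neg,
    Complex.norm_natCast]
  norm_num

lemma bessel_summable_aux (c : ℂ) {μ : ℂ} (hμ : ∀ n : ℕ, μ ≠ -(n : ℂ)) {R : ℝ} (hR : 0 ≤ R) :
    Summable (fun n : ℕ => ((n:ℝ) + 1) * ‖besselCoeff c μ n‖ * R ^ n) := by
  apply summable_of_ratio_norm_eventually_le (r := 1/2) (by norm_num)
  have hev : ∀ᶠ n : ℕ in Filter.atTop, ‖μ‖ + 1 ≤ (n:ℝ) ∧ ‖c‖ * R ≤ (n:ℝ) := by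
    filter_upwards [Filter.eventually_ge_atTop (⌈‖μ‖ + 1⌉₊ ⊔ ⌈‖c‖ * R⌉₊)] with n hn
    have hn1 : (⌈‖μ‖ + 1⌉₊ : ℝ) ≤ n := by exact_mod_cast le_trans le_sup_left hn
    have hn2 : (⌈‖c‖ * R⌉₊ : ℝ) ≤ n := by exact_mod_cast le_trans le_sup_right hn
    exact ⟨le_trans (Nat.le_ceil _) hn1, le_trans (Nat.le_ceil _) hn2⟩
  filter_upwards [hev] with n hn
  obtain ⟨hn1, hn2⟩ := hn
  have hA : (0:ℝ) ≤ ‖besselCoeff c μ n‖ := norm_nonneg _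
  have hr : (0:ℝ) ≤ R ^ n := by positivity
  have hm : (1:ℝ) ≤ ‖μ + n‖ := by
    have h1 : ‖(n:ℂ)‖ ≤ ‖μ + n‖ + ‖μ‖ := by
      calc ‖(n:ℂ)‖ = ‖(μ + n) + (-μ)‖ := by ring_nf
        _ ≤ ‖μ + n‖ + ‖-μ‖ := norm_add_le _ _
        _ = ‖μ + n‖ + ‖μ‖ := by rw [norm_neg]
    rw [Complex.norm_natCast] at h1
    linarith
  have hcR : (0:ℝ) ≤ ‖c‖ * R := mul_nonneg (norm_nonneg _) hR
  have w1 : (0:ℝ) ≤ (((n+1:ℕ):ℝ) + 1) * ‖besselCoeff c μ (n+1)‖ * R^(n+1) :=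
    mul_nonneg (mul_nonneg (by positivity) (norm_nonneg _)) (pow_nonneg hR _)
  have w2 : (0:ℝ) ≤ ((n:ℝ)+1) * ‖besselCoeff c μ n‖ * R^n :=
    mul_nonneg (mul_nonneg (by positivity) (norm_nonneg _)) (pow_nonneg hR _)
  rw [Real.norm_eq_abs, Real.norm_eq_abs, _root_.abs_of_nonneg w1,
    _root_.abs_of_nonneg w2, besselNorm_succ c hμ n]
  have hd : (0:ℝ) < 4 * ‖μ + n‖ * ((n:ℝ) + 1) := by positivity
  have key : ((((n+1:ℕ)):ℝ)+1) * (‖besselCoeff c μ n‖ * ‖c‖ / (4 * ‖μ + n‖ * ((n:ℝ) + 1))) * R^(n+1)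
      = ((((n+1:ℕ)):ℝ)+1) * (‖besselCoeff c μ n‖ * ‖c‖) * R^(n+1) / (4 * ‖μ + n‖ * ((n:ℝ) + 1)) := by
    ring
  rw [key, div_le_iff₀ hd]
  push_cast
  rw [pow_succ]
  nlinarith [mul_le_mul_of_nonneg_left hn2 (mul_nonneg hA hr),
    mul_le_mul_of_nonneg_left hm (mul_nonneg (mul_nonneg hA hr) (by positivity : (0:ℝ) ≤ ((n:ℝ)+1)^2)),
    mul_nonneg (mul_nonneg hA hr) hcR, Nat.cast_nonneg (α := ℝ) n]

lemma bessel_summable_norm (c : ℂ) {μ : ℂ} (hμ : ∀ n : ℕ, μ ≠ -(n : ℂ)) {R : ℝ} (hR : 0 ≤ R) :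
    Summable (fun n : ℕ => ‖besselCoeff c μ n‖ * R ^ n) := by
  refine Summable.of_nonneg_of_le (fun n => by positivity) (fun n => ?_) (bessel_summable_aux c hμ hR)
  have hA : (0:ℝ) ≤ ‖besselCoeff c μ n‖ := norm_nonneg _
  have hr : (0:ℝ) ≤ R ^ n := by positivity
  nlinarith [mul_nonneg (Nat.cast_nonneg (α := ℝ) n) (mul_nonneg hA hr)]

lemma bessel_summable (c : ℂ) {μ : ℂ} (hμ : ∀ n : ℕ, μ ≠ -(n : ℂ)) (z : ℂ) :
    Summable (fun n : ℕ => besselCoeff c μ n * z ^ n) := by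
  apply Summable.of_norm
  simpa [norm_mul, norm_pow] using bessel_summable_norm c hμ (norm_nonneg z)

lemma bessel_le_deriv_bound (c : ℂ) {μ : ℂ} {R : ℝ} (hR : 1 ≤ R) (n : ℕ) {z : ℂ} (hz : ‖z‖ ≤ R) :
    ‖besselCoeff c μ n * ((n:ℂ) * z ^ (n - 1))‖ ≤ ((n:ℝ) + 1) * ‖besselCoeff c μ n‖ * R ^ n := by
  rw [norm_mul, norm_mul, norm_pow, Complex.norm_natCast]
  have hA : (0:ℝ) ≤ ‖besselCoeff c μ n‖ := norm_nonneg _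
  have h1 : ‖z‖ ^ (n-1) ≤ R ^ n :=
    le_trans (pow_le_pow_left₀ (norm_nonneg z) hz _) (pow_le_pow_right₀ hR (Nat.sub_le n 1))
  have h2 : (0:ℝ) ≤ ‖z‖ ^ (n-1) := by positivity
  nlinarith [Nat.cast_nonneg (α := ℝ) n,
    mul_le_mul_of_nonneg_left h1 (mul_nonneg (Nat.cast_nonneg (α := ℝ) n) hA)]

lemma bessel_summable_deriv (c : ℂ) {μ : ℂ} (hμ : ∀ n : ℕ, μ ≠ -(n : ℂ)) (z : ℂ) :
    Summable (fun n : ℕ => besselCoeff c μ n * ((n:ℂ) * z ^ (n - 1))) := by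
  apply Summable.of_norm
  have hR : (1:ℝ) ≤ ‖z‖ + 1 := by linarith [norm_nonneg z]
  refine Summable.of_nonneg_of_le (fun n => norm_nonneg _)
    (fun n => bessel_le_deriv_bound c hR n (by linarith))
    (bessel_summable_aux c hμ (by positivity))

/-- the normalized Bessel power series `∑ b_n z^n`. -/
def besselg (c μ : ℂ) (z : ℂ) : ℂ := ∑' n : ℕ, besselCoeff c μ n * z ^ n

lemma besselg_zero (c μ : ℂ) : besselg c μ 0 = 1 := by
  unfold besselg
  rw [tsum_eq_single 0 (fun n hn => by
    rw [zero_pow hn, mul_zero])]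
  rw [pow_zero, mul_one, besselCoeff_zero]

lemma divZ_genBessel (c μ : ℂ) (z : ℂ) :
    divZ (genBessel μ c) z = besselg c μ z := by
  unfold divZ genBessel besselg
  by_cases hz : z = 0
  · subst hz
    rw [if_pos rfl]
    rw [tsum_eq_single 0 (fun n hn => by rw [zero_pow hn, mul_zero])]
    rw [pow_zero, mul_one, besselCoeff_zero]
  · rw [if_neg hz]
    have e : ∀ n : ℕ, besselCoeff c μ n * z ^ (n + 1) = (besselCoeff c μ n * z ^ n) * z := by
      intro n; rw [pow_succ]; ring
    rw [tsum_congr e, tsum_mul_right, mul_div_cancel_right₀ _ hz]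

lemma besselg_hasDerivAt (c : ℂ) {μ : ℂ} (hμ : ∀ n : ℕ, μ ≠ -(n : ℂ)) (z : ℂ) :
    HasDerivAt (besselg c μ) (∑' n : ℕ, besselCoeff c μ n * ((n:ℂ) * z ^ (n - 1))) z := by
  set R : ℝ := ‖z‖ + 1 with hRdef
  have hR1 : (1:ℝ) ≤ R := by rw [hRdef]; linarith [norm_nonneg z]
  have hzR : z ∈ ball (0:ℂ) R := by
    simp only [mem_ball, dist_zero_right]; simp [hRdef]
  refine hasDerivAt_of_tendstoLocallyUniformlyOn (isOpen_ball (x := (0:ℂ)) (ε := R))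
    (f := fun N w => ∑ n ∈ Finset.range N, besselCoeff c μ n * w ^ n)
    (f' := fun N w => ∑ n ∈ Finset.range N, besselCoeff c μ n * ((n:ℂ) * w ^ (n - 1)))
    (g := besselg c μ) (l := Filter.atTop)
    (g' := fun w => ∑' n : ℕ, besselCoeff c μ n * ((n:ℂ) * w ^ (n - 1)))
    ?_ ?_ ?_ hzR
  · apply TendstoUniformlyOn.tendstoLocallyUniformlyOn
    apply tendstoUniformlyOn_tsum_nat (bessel_summable_aux c hμ (R := R) (by linarith))
    intro n w hw
    exact bessel_le_deriv_bound c hR1 n (by simpa [dist_zero_right] using (mem_ball.mp hw).le)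
  · filter_upwards with N w hw
    apply HasDerivAt.fun_sum
    intro n _
    simpa using (hasDerivAt_pow n w).const_mul (besselCoeff c μ n)
  · intro w hw
    exact (bessel_summable c hμ w).hasSum.tendsto_sum_nat

lemma bessel_identity (c : ℂ) {κ : ℂ} (hκ : ∀ n : ℕ, κ ≠ -(n : ℂ))
    (hκ1 : ∀ n : ℕ, κ + 1 ≠ -(n : ℂ)) (z : ℂ) :
    κ * besselg c κ z =
      κ * besselg c (κ + 1) z + z * ∑' n : ℕ, besselCoeff c (κ+1) n * ((n:ℂ) * z ^ (n - 1)) := by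
  unfold besselg
  rw [← tsum_mul_left, ← tsum_mul_left, ← tsum_mul_left,
    ← Summable.tsum_add ((bessel_summable c hκ1 z).mul_left κ) ((bessel_summable_deriv c hκ1 z).mul_left z)]
  apply tsum_congr
  intro n
  have e : z * (besselCoeff c (κ+1) n * ((n:ℂ) * z ^ (n - 1))) = (n:ℂ) * besselCoeff c (κ+1) n * z ^ n := by
    cases n with
    | zero => simp
    | succ m => simp only [Nat.add_sub_cancel, pow_succ]; push_cast; ring
  rw [e]
  have := besselCoeff_step c hκ hκ1 n
  linear_combination (-(z ^ n)) * this

/-- Jack / Miller–Mocanu clash lemma for entire functions. -/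
lemma clash {P : ℂ → ℂ} {P' : ℂ → ℂ} (hP : ∀ z, HasDerivAt P (P' z) z)
    (hP0 : P 0 = 0) {M : ℝ} (hM : 0 < M) {z1 : ℂ} (hz1 : ‖z1‖ < 1) (hMz1 : M ≤ ‖P z1‖) :
    ∃ (z0 : ℂ) (k : ℝ), ‖z0‖ < 1 ∧ ‖P z0‖ = M ∧ 1 ≤ k ∧ z0 * P' z0 = (k : ℂ) * P z0 := by
  have hPd : Differentiable ℂ P := fun z => (hP z).differentiableAt
  have hPc : Continuous P := hPd.continuous
  set A : Set ℂ := Metric.closedBall (0:ℂ) ‖z1‖ ∩ {z | M ≤ ‖P z‖} with hA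
  have hAc : IsCompact A :=
    (isCompact_closedBall _ _).inter_right (isClosed_le continuous_const hPc.norm)
  have hAne : A.Nonempty := ⟨z1, ⟨by simp only [mem_closedBall, dist_zero_right]; exact le_refl _, hMz1⟩⟩
  obtain ⟨z0, hz0A, hz0min⟩ := hAc.exists_isMinOn hAne continuous_norm.continuousOn
  have hz0le : ‖z0‖ ≤ ‖z1‖ := by simpa [hA, dist_zero_right] using hz0A.1
  have hz0M : M ≤ ‖P z0‖ := hz0A.2
  have hz0ne : z0 ≠ 0 := by
    rintro rfl
    rw [hP0] at hz0M; simp at hz0M; linarith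
  have hz0pos : 0 < ‖z0‖ := norm_pos_iff.mpr hz0ne
  have hball : ∀ z : ℂ, ‖z‖ < ‖z0‖ → ‖P z‖ < M := by
    intro z hz
    by_contra hcon
    push_neg at hcon
    have hzA : z ∈ A := ⟨by simp only [mem_closedBall, dist_zero_right]; linarith, hcon⟩
    have := isMinOn_iff.mp hz0min z hzA
    simp only [norm] at this
    linarith [isMinOn_iff.mp hz0min z hzA]
  have hM0 : ‖P z0‖ = M := by
    by_contra hne
    have hlt : M < ‖P z0‖ := lt_of_le_of_ne hz0M (Ne.symm hne)
    have hcont : ContinuousOn (fun t : ℝ => ‖P ((t:ℂ) * z0)‖) (Icc 0 1) :=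
      ((hPc.comp (Complex.continuous_ofReal.mul continuous_const)).norm).continuousOn
    have hMmem : M ∈ Icc ((fun t : ℝ => ‖P ((t:ℂ) * z0)‖) 0) ((fun t : ℝ => ‖P ((t:ℂ) * z0)‖) 1) := by
      simp only [Complex.ofReal_zero, Complex.ofReal_one, zero_mul, one_mul, hP0, norm_zero]
      exact ⟨hM.le, hlt.le⟩
    obtain ⟨t, ht, hPt⟩ := intermediate_value_Icc (by norm_num : (0:ℝ) ≤ 1) hcont hMmem
    simp only at hPt
    have ht1 : t < 1 := by
      rcases lt_or_eq_of_le ht.2 with h' | h'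
      · exact h'
      · exfalso; rw [h'] at hPt; simp only [Complex.ofReal_one, one_mul] at hPt; linarith
    have hnorm : ‖(t:ℂ) * z0‖ < ‖z0‖ := by
      rw [norm_mul, Complex.norm_real, Real.norm_eq_abs, _root_.abs_of_nonneg ht.1]
      nlinarith
    have := hball _ hnorm
    rw [hPt] at this
    exact lt_irrefl _ this
  have hle : ∀ z : ℂ, ‖z‖ ≤ ‖z0‖ → ‖P z‖ ≤ M := by
    intro z hz
    rcases lt_or_eq_of_le hz with hcase | hcase
    · exact (hball z hcase).le
    · have htt : Tendsto (fun t : ℝ => ‖P ((t:ℂ) * z)‖) (nhdsWithin 1 (Iio 1)) (𝓝 ‖P z‖) := by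
        have hc2 : Continuous fun t : ℝ => ‖P ((t:ℂ) * z)‖ :=
          (hPc.comp (Complex.continuous_ofReal.mul continuous_const)).norm
        have h3 : Tendsto (fun t : ℝ => ‖P ((t:ℂ) * z)‖) (𝓝 1) (𝓝 ‖P z‖) := by
          have := hc2.tendsto (1:ℝ)
          simpa using this
        exact h3.mono_left nhdsWithin_le_nhds
      refine le_of_tendsto htt ?_
      filter_upwards [self_mem_nhdsWithin,
        mem_nhdsWithin_of_mem_nhds (Ioi_mem_nhds (by norm_num : (0:ℝ) < 1))] with t ht1 ht0
      apply (hball _ _).le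
      rw [norm_mul, Complex.norm_real, Real.norm_eq_abs, _root_.abs_of_pos (mem_Ioi.mp ht0), hcase]
      have : t < 1 := ht1
      nlinarith
  -- Jack's lemma part
  set h : ℂ → ℂ := fun w => P (z0 * w) with hhdef
  have hhd : ∀ w, HasDerivAt h (P' (z0 * w) * z0) w := by
    intro w
    have := (hP (z0 * w)).comp w ((hasDerivAt_id w).const_mul z0)
    simpa [hhdef, Function.comp_def, mul_comm] using this
  have hh0 : h 0 = 0 := by simp [hhdef, hP0]
  have hh1 : h 1 = P z0 := by simp [hhdef]
  have hb : ∀ w : ℂ, ‖w‖ ≤ 1 → ‖h w‖ ≤ M := by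
    intro w hw
    apply hle
    rw [norm_mul]
    nlinarith [norm_nonneg z0]
  have hS : ∀ w : ℂ, ‖w‖ < 1 → ‖h w‖ ≤ M * ‖w‖ := by
    intro w hw
    have key : ∀ ε : ℝ, 0 < ε → ‖h w‖ ≤ M * ‖w‖ + ε := by
      intro ε hε
      have hd : DifferentiableOn ℂ h (ball (0:ℂ) 1) :=
        fun x _ => ((hhd x).differentiableAt).differentiableWithinAt
      have hmaps : MapsTo h (ball (0:ℂ) 1) (closedBall (h 0) (M + ε)) := by
        intro x hx
        rw [mem_closedBall, hh0, dist_zero_right]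
        exact le_trans (hb x (mem_ball_zero_iff.mp hx).le) (by linarith)
      have := Complex.dist_le_div_mul_dist_of_mapsTo_ball hd hmaps (mem_ball_zero_iff.mpr hw)
      rw [hh0, dist_zero_right, dist_zero_right, div_one] at this
      calc ‖h w‖ ≤ (M + ε) * ‖w‖ := this
        _ = M * ‖w‖ + ε * ‖w‖ := by ring
        _ ≤ M * ‖w‖ + ε := by nlinarith [norm_nonneg w]
    exact le_of_forall_pos_le_add key
  set C : ℂ := (starRingEnd ℂ) (P z0) with hCdef
  have hCnorm : ‖C‖ = M := by
    rw [hCdef, Complex.norm_conj, hM0]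
  set q : ℂ := P' z0 * z0 * C with hqdef
  -- the u-function: real derivative bound at 1
  have hu : HasDerivAt (fun t : ℝ => ((h (t:ℂ)) * C).re) q.re 1 := by
    have e1 : HasDerivAt (fun ζ : ℂ => h ζ * C) (P' z0 * z0 * C) ((1:ℝ):ℂ) := by
      have := (hhd 1).mul_const C
      simpa using this
    have e2 := e1.comp_ofReal
    exact (Complex.reCLM.hasFDerivAt.comp_hasDerivAt 1 e2)
  have hu1 : ((h ((1:ℝ):ℂ)) * C).re = M * M := by
    rw [Complex.ofReal_one, hh1, hCdef, Complex.mul_conj]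
    rw [Complex.normSq_eq_norm_sq, hM0]
    norm_num [Complex.ofReal_re, pow_two]
  have hqre : M * M ≤ q.re := by
    have hNB : (𝓝[Ioo (0:ℝ) 1] (1:ℝ)).NeBot := right_nhdsWithin_Ioo_neBot (by norm_num)
    have hslope : Tendsto (slope (fun t : ℝ => ((h (t:ℂ)) * C).re) 1) (𝓝[Ioo (0:ℝ) 1] 1)
        (𝓝 q.re) :=
      (hasDerivAt_iff_tendsto_slope.mp hu).mono_left
        (nhdsWithin_mono _ (fun t ht => ne_of_lt ht.2))
    refine ge_of_tendsto hslope ?_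
    filter_upwards [self_mem_nhdsWithin] with t ht
    have hut : ((h ((t:ℝ):ℂ)) * C).re ≤ M * M * t := by
      have h1 : ((h (t:ℂ)) * C).re ≤ ‖h (t:ℂ) * C‖ := by
        exact Complex.re_le_norm _
      have h2 : ‖h (t:ℂ) * C‖ = ‖h (t:ℂ)‖ * M := by rw [norm_mul, hCnorm]
      have h3 : ‖h (t:ℂ)‖ ≤ M * t := by
        have hnt : ‖((t:ℝ):ℂ)‖ = t := by
          rw [Complex.norm_real, Real.norm_eq_abs, _root_.abs_of_pos ht.1]
        have := hS (t:ℂ) (by rw [hnt]; exact ht.2)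
        rwa [hnt] at this
      nlinarith
    have hden : t - 1 < 0 := by linarith [ht.2]
    have hs2 := slope_def_field (fun t : ℝ => ((h ((t:ℝ):ℂ)) * C).re) 1 t
    rw [hs2, le_div_iff_of_neg hden]
    beta_reduce
    nlinarith [hut, hu1]
  -- the angular derivative: imaginary part vanishes
  have him : q.im = 0 := by
    have hF : HasDerivAt (fun θ : ℝ => ((h (Complex.exp ((θ:ℂ) * I))) * C).re) ((q * I).re) 0 := by
      have w1 : HasDerivAt (fun ζ : ℂ => ζ * I) I (0:ℂ) := by
        simpa using (hasDerivAt_id (0:ℂ)).mul_const I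
      have w2 : HasDerivAt (fun ζ : ℂ => Complex.exp (ζ * I)) I (0:ℂ) := by
        have := w1.cexp
        simpa using this
      have w3 : HasDerivAt h (P' z0 * z0) (Complex.exp ((0:ℂ) * I)) := by
        have := hhd 1
        simpa using this
      have w4 : HasDerivAt (fun ζ : ℂ => h (Complex.exp (ζ * I))) (P' z0 * z0 * I) (0:ℂ) := by
        have := w3.comp (0:ℂ) w2
        simpa [Function.comp_def] using this
      have w5 : HasDerivAt (fun ζ : ℂ => h (Complex.exp (ζ * I)) * C) (q * I) ((0:ℝ):ℂ) := by
        have := w4.mul_const C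
        have e : P' z0 * z0 * I * C = q * I := by rw [hqdef]; ring
        rw [e] at this
        simpa using this
      exact (Complex.reCLM.hasFDerivAt.comp_hasDerivAt 0 w5.comp_ofReal)
    have h00 : ((h (Complex.exp (((0:ℝ):ℂ) * I))) * C).re = M * M := by
      rw [show (((0:ℝ):ℂ) * I) = 0 by norm_num, Complex.exp_zero]
      simpa using hu1
    have hmax : IsLocalMax (fun θ : ℝ => ((h (Complex.exp ((θ:ℂ) * I))) * C).re) 0 := by
      refine Filter.Eventually.of_forall fun θ => ?_
      have hb1 : ‖Complex.exp ((θ:ℂ) * I)‖ = 1 := by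
        rw [Complex.norm_exp_ofReal_mul_I]
      have h1 : ((h (Complex.exp ((θ:ℂ) * I))) * C).re ≤ M * M := by
        have h2 := Complex.re_le_norm ((h (Complex.exp ((θ:ℂ) * I))) * C)
        rw [norm_mul, hCnorm] at h2
        nlinarith [hb _ (le_of_eq hb1), norm_nonneg (h (Complex.exp ((θ:ℂ) * I)))]
      show ((h (Complex.exp ((θ:ℂ) * I))) * C).re ≤ ((h (Complex.exp (((0:ℝ):ℂ) * I))) * C).re
      rw [h00]
      exact h1
    have hder0 := hmax.hasDerivAt_eq_zero hF
    have he : (q * I).re = -q.im := by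
      simp [Complex.mul_re]
    rw [hder0] at he
    linarith [he.symm]
  -- conclusion
  have hPz0 : P z0 ≠ 0 := by
    intro e; rw [e, norm_zero] at hM0; linarith
  have hCne : C ≠ 0 := by
    rw [hCdef]; simpa using hPz0
  refine ⟨z0, q.re / (M*M), lt_of_le_of_lt hz0le hz1, hM0, ?_, ?_⟩
  · rw [le_div_iff₀ (by positivity)]; nlinarith
  · have hmc : P z0 * C = ((M*M : ℝ) : ℂ) := by
      rw [hCdef, Complex.mul_conj, Complex.normSq_eq_norm_sq, hM0]
      push_cast; ring
    have hqc : q = ((q.re : ℝ) : ℂ) := by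
      apply Complex.ext
      · simp
      · simp [him]
    apply mul_right_cancel₀ hCne
    have e1 : z0 * P' z0 * C = q := by rw [hqdef]; ring
    rw [e1, hqc, mul_assoc, hmc]
    have hMne : (M : ℂ) ≠ 0 := by
      simpa using hM.ne'
    push_cast
    field_simp
    rw [Complex.ofReal_re]

end AuxProofs

/-- Consequence (4.10), answering the open problem of Andras and Baricz. -/
theorem genBessel_divZ_bound (c κ : ℂ) (hκre : -(1 / 2 : ℝ) ≤ κ.re)
    (hκ : ∀ n : ℕ, κ ≠ -(n : ℂ))
    (M : ℝ) (hM : 0 < M)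
    (h : ∀ z ∈ unitDisk, ‖divZ (genBessel κ c) z - 1‖ < M) :
    ∀ z ∈ unitDisk, ‖divZ (genBessel (κ + 1) c) z - 1‖ < M := by
  have hκ1 : ∀ n : ℕ, κ + 1 ≠ -(n : ℂ) := by
    intro n he
    apply hκ (n + 1)
    push_cast
    linear_combination he
  by_contra hcon
  push_neg at hcon
  obtain ⟨z1, hz1disk, hz1⟩ := hcon
  have hz1n : ‖z1‖ < 1 := mem_ball_zero_iff.mp hz1disk
  rw [divZ_genBessel] at hz1
  have hP : ∀ z, HasDerivAt (fun z => besselg c (κ+1) z - 1)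
      ((fun z => ∑' n : ℕ, besselCoeff c (κ+1) n * ((n:ℂ) * z ^ (n - 1))) z) z :=
    fun z => (besselg_hasDerivAt c hκ1 z).sub_const 1
  have hP0 : (fun z => besselg c (κ+1) z - 1) 0 = 0 := by
    simp [besselg_zero]
  obtain ⟨z0, k, hz0n, hz0M, hk1, hid⟩ := clash hP hP0 hM hz1n (by simpa using hz1)
  beta_reduce at hz0M hid
  have hz0disk : z0 ∈ unitDisk := mem_ball_zero_iff.mpr hz0n
  have hgk := h z0 hz0disk
  rw [divZ_genBessel] at hgk
  have hident := bessel_identity c hκ hκ1 z0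
  have hid' : z0 * (∑' n : ℕ, besselCoeff c (κ+1) n * ((n:ℂ) * z0 ^ (n - 1)))
      = (k:ℂ) * (besselg c (κ+1) z0 - 1) := hid
  have hkey : κ * (besselg c κ z0 - 1) = (κ + (k:ℂ)) * (besselg c (κ+1) z0 - 1) := by
    linear_combination hident + hid'
  have hz0M' : ‖besselg c (κ+1) z0 - 1‖ = M := hz0M
  have hnorm : ‖κ‖ * ‖besselg c κ z0 - 1‖ = ‖κ + (k:ℂ)‖ * M := by
    rw [← norm_mul, hkey, norm_mul, hz0M']
  have h2 : ‖κ‖^2 ≤ ‖κ + (k:ℂ)‖^2 := by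
    rw [Complex.sq_norm, Complex.sq_norm,
      Complex.normSq_apply, Complex.normSq_apply]
    simp only [Complex.add_re, Complex.add_im, Complex.ofReal_re, Complex.ofReal_im, add_zero]
    nlinarith [hk1, hκre]
  have hκge : ‖κ‖ ≤ ‖κ + (k:ℂ)‖ := by
    nlinarith [norm_nonneg (κ + (k:ℂ)), norm_nonneg κ]
  have hκ0 : κ ≠ 0 := fun e => hκ 0 (by simpa using e)
  have hκpos : 0 < ‖κ‖ := norm_pos_iff.mpr hκ0
  have hge : ‖κ‖ * M ≤ ‖κ‖ * ‖besselg c κ z0 - 1‖ := by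
    rw [hnorm]
    nlinarith
  have hfin : M ≤ ‖besselg c κ z0 - 1‖ := le_of_mul_le_mul_left hge hκpos
  linarith


end
end
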